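/- arXiv:math/0702134 — 7 statements merged into one kernel-verified Lean document; each statement's English description precedes it below -/
import Mathlib

section
/- Let F be a nonabelian free group of finite rank (the free group on n ≥ 2 free generators). Then the negligible subsets of F form a proper ideal in the Boolean algebra of subsets of F: the union of two negligible subsets of F is negligible, any subset of a negligible subset of F is negligible, and F itself is not negligible. -/
open FirstOrder

/-- The formal inverse of a word (as a list of letters with exponents ±1). -/
def invWord {α : Type*} (u : List (α × Bool)) : List (α × Bool) :=
  (u.map fun x => (x.1, !x.2)).reverse

/-- `s = (p, u)` is an embedded subword of (the reduced word of) `w`: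
`u` is a nonempty word occurring as the contiguous block of letters of the
reduced word of `w` starting at position `p`. -/
def IsEmbeddedSubword {α : Type*} [DecidableEq α] (w : FreeGroup α)
    (s : ℕ × List (α × Bool)) : Prop :=
  s.2 ≠ [] ∧ (w.toWord.drop s.1).take s.2.length = s.2

/-- A proper embedded subword of `w` is an embedded subword which is not all of `w`. -/
def IsProperEmbeddedSubword {α : Type*} [DecidableEq α] (w : FreeGroup α)
    (s : ℕ × List (α × Bool)) : Prop :=
  IsEmbeddedSubword w s ∧ s.2.length < w.toWord.length

/-- Position `j` (a letter of the reduced word) is covered by the embedded subword `s`. -/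
def CoversPos {α : Type*} (s : ℕ × List (α × Bool)) (j : ℕ) : Prop :=
  s.1 ≤ j ∧ j < s.1 + s.2.length

/-- A subset `X` of a free group is negligible if there is `N : ℕ` such that for every
`ε > 0`, all but finitely many `w ∈ X` admit `N` pairs of proper embedded subwords
`(w_i, w_i')` with `w_i'` equal to `w_i` or to its inverse word, `w_i ≠ w_i'` as embedded
subwords, and such that the positions of `w` not covered by any of them number at most
`ε · length w`. -/
def Negligible {α : Type*} [DecidableEq α] (X : Set (FreeGroup α)) : Prop :=
  ∃ N : ℕ, ∀ ε : ℝ, 0 < ε → ∃ S : Finset (FreeGroup α),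
    ∀ w ∈ X, w ∉ S →
      ∃ sub : Fin N → (ℕ × List (α × Bool)) × (ℕ × List (α × Bool)),
        (∀ i, IsProperEmbeddedSubword w (sub i).1 ∧ IsProperEmbeddedSubword w (sub i).2) ∧
        (∀ i, (sub i).2.2 = (sub i).1.2 ∨ (sub i).2.2 = invWord (sub i).1.2) ∧
        (∀ i, (sub i).1 ≠ (sub i).2) ∧
        (({j : ℕ | j < w.toWord.length ∧
            ∀ i, ¬ CoversPos ((sub i).1) j ∧ ¬ CoversPos ((sub i).2) j}.ncard : ℝ)
          ≤ ε * w.toWord.length)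

/-- The functions of the first-order language of groups:
a constant `1`, a unary function `⁻¹` and a binary function `·`. -/
def groupFunctions : ℕ → Type
  | 0 => Unit
  | 1 => Unit
  | 2 => Unit
  | _ => Empty

/-- The first-order language of groups `(·, ⁻¹, 1)`. -/
def groupLang : Language := ⟨groupFunctions, fun _ => Empty⟩

/-- Any group is a structure for the language of groups in the natural way. -/
instance groupLangStructure (G : Type*) [Group G] : groupLang.Structure G where
  funMap {n} f x :=
    match n, f with
    | 0, _ => 1
    | 1, _ => (x 0)⁻¹
    | 2, _ => x 0 * x 1
    | (_ + 3), f => f.elim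
  RelMap {n} r _ := r.elim

/-- A subset of a group is definable if it is defined, with parameters, by a first-order
formula in the language of groups. -/
def IsDefinable {G : Type*} [Group G] (X : Set G) : Prop :=
  Set.Definable₁ (Set.univ : Set G) groupLang X

/-- A subset `X` of a group is (left) generic if finitely many left translates of `X`
cover the group. -/
def Generic {G : Type*} [Group G] (X : Set G) : Prop :=
  ∃ s : Finset G, ∀ x : G, ∃ g ∈ s, g⁻¹ * x ∈ X

namespace NegAux

open List
open scoped Classical

/-- positions of the separator letters -/
def Sb : ℕ → ℕ
  | 0 => 0
  | i + 1 => Sb i + (i + 2)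

lemma Sb_succ (i : ℕ) : Sb (i + 1) = Sb i + (i + 2) := rfl

lemma Sb_strictMono : StrictMono Sb :=
  strictMono_nat_of_lt_succ fun i => by rw [Sb_succ]; omega

lemma two_Sb (k : ℕ) : 2 * Sb k = k * k + 3 * k := by
  induction k with
  | zero => rfl
  | succ k ih =>
    have h : (k + 1) * (k + 1) + 3 * (k + 1) = (k * k + 3 * k) + 2 * (k + 2) := by ring
    rw [Sb_succ, Nat.mul_add, ih, h]

/-- `j` is a separator position -/
def Bpos (k j : ℕ) : Prop := ∃ i, i ≤ k ∧ Sb i = j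

/-- the test word: `b a b a a b a a a b ... b a^k b` -/
noncomputable def wk (n k : ℕ) (hn : 2 ≤ n) : List (Fin n × Bool) :=
  List.ofFn (fun j : Fin (Sb k + 1) =>
    (⟨if Bpos k j.val then 1 else 0, by split <;> omega⟩, true))

lemma wk_length {n k : ℕ} (hn : 2 ≤ n) : (wk n k hn).length = Sb k + 1 := by
  simp [wk]

lemma wk_snd {n k : ℕ} (hn : 2 ≤ n) {x : Fin n × Bool} (hx : x ∈ wk n k hn) :
    x.2 = true := by
  rw [wk, List.mem_ofFn] at hx
  obtain ⟨j, rfl⟩ := hx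
  rfl

lemma wk_get {n k : ℕ} (hn : 2 ≤ n) (j : ℕ) (hj : j < (wk n k hn).length) :
    ((wk n k hn)[j]'hj).1.val = if Bpos k j then 1 else 0 := by
  simp only [wk, List.getElem_ofFn]

lemma bpos_iff_of_eq {n k : ℕ} (hn : 2 ≤ n) {j j' : ℕ}
    (hj : j < (wk n k hn).length) (hj' : j' < (wk n k hn).length)
    (h : (wk n k hn)[j]'hj = (wk n k hn)[j']'hj') : (Bpos k j ↔ Bpos k j') := by
  have h1 : ((wk n k hn)[j]'hj).1.val = ((wk n k hn)[j']'hj').1.val := by rw [h]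
  rw [wk_get hn j hj, wk_get hn j' hj'] at h1
  by_cases hb : Bpos k j <;> by_cases hb' : Bpos k j'
  · exact iff_of_true hb hb'
  · rw [if_pos hb, if_neg hb'] at h1; omega
  · rw [if_neg hb, if_pos hb'] at h1; omega
  · exact iff_of_false hb hb'

lemma exists_near (k p : ℕ) (h : p ≤ Sb k) : ∃ i, i ≤ k ∧ p ≤ Sb i ∧ Sb i ≤ p + k := by
  induction k with
  | zero =>
    have h0 : Sb 0 = 0 := rfl
    exact ⟨0, le_refl _, h, by omega⟩
  | succ k ih =>
    by_cases h' : p ≤ Sb k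
    · obtain ⟨i, h1, h2, h3⟩ := ih h'
      exact ⟨i, by omega, h2, by omega⟩
    · refine ⟨k + 1, le_refl _, h, ?_⟩
      have := Sb_succ k
      omega

lemma window_unique (k p q : ℕ) (hp : p + (2 * k + 3) ≤ Sb k + 1)
    (hq : q + (2 * k + 3) ≤ Sb k + 1)
    (h : ∀ t, t < 2 * k + 3 → (Bpos k (p + t) ↔ Bpos k (q + t))) : p = q := by
  have hpk : p ≤ Sb k := by omega
  obtain ⟨i, hik, hi, hub⟩ := exists_near k p hpk
  have hSi1 := Sb_succ i
  have hik1 : i + 1 ≤ k := by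
    have h2 : Sb (i + 1) ≤ Sb k := by omega
    exact Sb_strictMono.le_iff_le.mp h2
  set t1 := Sb i - p with ht1def
  set t2 := Sb (i + 1) - p with ht2def
  have ht1 : t1 < 2 * k + 3 := by omega
  have ht2 : t2 < 2 * k + 3 := by omega
  have hBpt1 : Bpos k (p + t1) := ⟨i, hik, by omega⟩
  have hBpt2 : Bpos k (p + t2) := ⟨i + 1, hik1, by omega⟩
  obtain ⟨j, hjk, hSj⟩ := (h t1 ht1).mp hBpt1
  obtain ⟨j', hj'k, hSj'⟩ := (h t2 ht2).mp hBpt2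
  have hjj' : j < j' := by
    have hlt : Sb j < Sb j' := by omega
    exact Sb_strictMono.lt_iff_lt.mp hlt
  have hsucc : j' = j + 1 := by
    by_contra hne
    have hlt : j + 1 < j' := by omega
    have hmono1 : Sb j < Sb (j + 1) := Sb_strictMono (by omega)
    have hmono2 : Sb (j + 1) < Sb j' := Sb_strictMono hlt
    set u := Sb (j + 1) - q with hudef
    have hu2 : u < 2 * k + 3 := by omega
    have hqu : Bpos k (q + u) := ⟨j + 1, by omega, by omega⟩
    obtain ⟨r, hrk, hSr⟩ := (h u hu2).mpr hqu
    have h1 : i < r := Sb_strictMono.lt_iff_lt.mp (by omega)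
    have h2 : r < i + 1 := Sb_strictMono.lt_iff_lt.mp (by omega)
    omega
  have hS' : Sb (j + 1) = Sb j + (j + 2) := Sb_succ j
  rw [hsucc] at hSj'
  have hij : j = i := by omega
  rw [hij] at hSj
  omega

lemma window_list {n k : ℕ} (hn : 2 ≤ n) (p q : ℕ)
    (hp : p + (2 * k + 3) ≤ Sb k + 1) (hq : q + (2 * k + 3) ≤ Sb k + 1)
    (h : ((wk n k hn).drop p).take (2 * k + 3) = ((wk n k hn).drop q).take (2 * k + 3)) :
    p = q := by
  have hlen := wk_length (n := n) (k := k) hn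
  apply window_unique k p q hp hq
  intro t ht
  have hpt : p + t < (wk n k hn).length := by omega
  have hqt : q + t < (wk n k hn).length := by omega
  have ht' : t < (((wk n k hn).drop p).take (2 * k + 3)).length := by
    simp; omega
  have heq : (wk n k hn)[p + t]'hpt = (wk n k hn)[q + t]'hqt := by
    have h2 := List.getElem_of_eq h ht'
    simpa [List.getElem_take, List.getElem_drop] using h2
  exact bpos_iff_of_eq hn hpt hqt heq

lemma reduce_eq_self {α : Type*} [DecidableEq α] {L : List (α × Bool)}
    (h : ∀ x ∈ L, x.2 = true) : FreeGroup.reduce L = L := by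
  induction L with
  | nil => rfl
  | cons x L ih =>
    have hx : x.2 = true := h x mem_cons_self
    have hL := ih (fun y hy => h y (mem_cons_of_mem _ hy))
    rw [FreeGroup.reduce.cons, hL]
    cases L with
    | nil => rfl
    | cons y t =>
      have hy : y.2 = true := h y (by simp)
      simp [hx, hy]

lemma toWord_wk {n k : ℕ} (hn : 2 ≤ n) :
    (FreeGroup.mk (wk n k hn)).toWord = wk n k hn := by
  rw [FreeGroup.toWord_mk, reduce_eq_self (fun x hx => wk_snd hn hx)]

lemma emb_len_le {n k : ℕ} (hn : 2 ≤ n) {p q : ℕ} {u : List (Fin n × Bool)}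
    (hpq : p ≠ q)
    (e1 : ((wk n k hn).drop p).take u.length = u)
    (e2 : ((wk n k hn).drop q).take u.length = u) :
    u.length ≤ 2 * k + 2 := by
  by_contra hlong
  push_neg at hlong
  have hlen := wk_length (n := n) (k := k) hn
  have hl1 := congrArg List.length e1
  have hl2 := congrArg List.length e2
  simp only [List.length_take, List.length_drop, hlen] at hl1 hl2
  have hw : ((wk n k hn).drop p).take (2 * k + 3) = ((wk n k hn).drop q).take (2 * k + 3) := by
    have f1 : u.take (2 * k + 3) = ((wk n k hn).drop p).take (2 * k + 3) := by
      conv_lhs => rw [← e1]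
      rw [List.take_take, min_eq_left (by omega)]
    have f2 : u.take (2 * k + 3) = ((wk n k hn).drop q).take (2 * k + 3) := by
      conv_lhs => rw [← e2]
      rw [List.take_take, min_eq_left (by omega)]
    rw [← f1, f2]
  exact hpq (window_list hn p q (by omega) (by omega) hw)

lemma pad_pair {n : ℕ} (hn : 2 ≤ n) (w : FreeGroup (Fin n))
    (hlen : n + 1 ≤ w.toWord.length) :
    ∃ P : (ℕ × List (Fin n × Bool)) × (ℕ × List (Fin n × Bool)),
      (IsProperEmbeddedSubword w P.1 ∧ IsProperEmbeddedSubword w P.2) ∧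
      (P.2.2 = P.1.2 ∨ P.2.2 = invWord P.1.2) ∧ P.1 ≠ P.2 := by
  obtain ⟨a, b, hab, heq⟩ := Fintype.exists_ne_map_eq_of_card_lt
    (fun i : Fin (n + 1) => ((w.toWord)[i.val]'(by omega)).1) (by simp)
  have ha : a.val < w.toWord.length := by omega
  have hb : b.val < w.toWord.length := by omega
  have hsingle : ∀ (j : ℕ) (hj : j < w.toWord.length),
      (w.toWord.drop j).take 1 = [(w.toWord)[j]'hj] := fun j hj => by
    rw [List.drop_eq_getElem_cons hj]; rfl
  refine ⟨((a.val, [(w.toWord)[a.val]'ha]), (b.val, [(w.toWord)[b.val]'hb])),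
    ⟨⟨⟨by simp, by simpa using hsingle a.val ha⟩, by simp; omega⟩,
     ⟨⟨by simp, by simpa using hsingle b.val hb⟩, by simp; omega⟩⟩, ?_, ?_⟩
  · by_cases hsnd : ((w.toWord)[a.val]'ha).2 = ((w.toWord)[b.val]'hb).2
    · left
      have : (w.toWord)[b.val]'hb = (w.toWord)[a.val]'ha :=
        Prod.ext_iff.mpr ⟨heq.symm, hsnd.symm⟩
      simp [this]
    · right
      have h2 : ((w.toWord)[b.val]'hb).2 = !((w.toWord)[a.val]'ha).2 := by
        revert hsnd
        cases hA : ((w.toWord)[a.val]'ha).2 <;> cases hB : ((w.toWord)[b.val]'hb).2 <;> simp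
      have : (w.toWord)[b.val]'hb = (((w.toWord)[a.val]'ha).1, !((w.toWord)[a.val]'ha).2) :=
        Prod.ext_iff.mpr ⟨heq.symm, h2⟩
      simp [invWord, this]
  · simp only [ne_eq, Prod.mk.injEq, not_and]
    intro h _
    exact hab (Fin.ext h)

end NegAux


/-- The negligible subsets of a nonabelian free group of finite rank form a proper ideal
in the Boolean algebra of subsets: unions of negligible sets are negligible, subsets of
negligible sets are negligible, and the whole group is not negligible. -/
theorem negligible_ideal (n : ℕ) (hn : 2 ≤ n) :
    (∀ X Y : Set (FreeGroup (Fin n)), Negligible X → Negligible Y → Negligible (X ∪ Y)) ∧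
    (∀ X Y : Set (FreeGroup (Fin n)), Y ⊆ X → Negligible X → Negligible Y) ∧
    ¬ Negligible (Set.univ : Set (FreeGroup (Fin n))) := by
  classical
  refine ⟨?_, ?_, ?_⟩
  · -- unions
    rintro X Y ⟨N1, h1⟩ ⟨N2, h2⟩
    refine ⟨max N1 N2, fun ε hε => ?_⟩
    obtain ⟨S1, hS1⟩ := h1 ε hε
    obtain ⟨S2, hS2⟩ := h2 ε hε
    have hfin : {w : FreeGroup (Fin n) | w.toWord.length ≤ n}.Finite :=
      Set.Finite.preimage (FreeGroup.toWord_injective.injOn)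
        (List.finite_length_le (Fin n × Bool) n)
    refine ⟨S1 ∪ S2 ∪ hfin.toFinset, ?_⟩
    intro w hw hwS
    simp only [Finset.mem_union, Set.Finite.mem_toFinset, Set.mem_setOf_eq, not_or,
      not_le] at hwS
    obtain ⟨⟨hw1, hw2⟩, hw3⟩ := hwS
    obtain ⟨P, hP1, hP2, hP3⟩ := NegAux.pad_pair hn w (by omega)
    have pad : ∀ M : ℕ, M ≤ max N1 N2 →
        (∃ sub : Fin M → (ℕ × List (Fin n × Bool)) × (ℕ × List (Fin n × Bool)),
          (∀ i, IsProperEmbeddedSubword w (sub i).1 ∧ IsProperEmbeddedSubword w (sub i).2) ∧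
          (∀ i, (sub i).2.2 = (sub i).1.2 ∨ (sub i).2.2 = invWord (sub i).1.2) ∧
          (∀ i, (sub i).1 ≠ (sub i).2) ∧
          (({j : ℕ | j < w.toWord.length ∧
              ∀ i, ¬ CoversPos ((sub i).1) j ∧ ¬ CoversPos ((sub i).2) j}.ncard : ℝ)
            ≤ ε * w.toWord.length)) →
        (∃ sub : Fin (max N1 N2) → (ℕ × List (Fin n × Bool)) × (ℕ × List (Fin n × Bool)),
          (∀ i, IsProperEmbeddedSubword w (sub i).1 ∧ IsProperEmbeddedSubword w (sub i).2) ∧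
          (∀ i, (sub i).2.2 = (sub i).1.2 ∨ (sub i).2.2 = invWord (sub i).1.2) ∧
          (∀ i, (sub i).1 ≠ (sub i).2) ∧
          (({j : ℕ | j < w.toWord.length ∧
              ∀ i, ¬ CoversPos ((sub i).1) j ∧ ¬ CoversPos ((sub i).2) j}.ncard : ℝ)
            ≤ ε * w.toWord.length)) := by
      rintro M hM ⟨sub, hs1, hs2, hs3, hs4⟩
      refine ⟨fun i => if h : i.val < M then sub ⟨i.val, h⟩ else P, ?_, ?_, ?_, ?_⟩
      · intro i; dsimp only; split
        · exact hs1 _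
        · exact hP1
      · intro i; dsimp only; split
        · exact hs2 _
        · exact hP2
      · intro i; dsimp only; split
        · exact hs3 _
        · exact hP3
      · refine le_trans ?_ hs4
        have hst : {j : ℕ | j < w.toWord.length ∧ ∀ i : Fin (max N1 N2),
              ¬ CoversPos (((fun i => if h : i.val < M then sub ⟨i.val, h⟩ else P) i)).1 j ∧
              ¬ CoversPos (((fun i => if h : i.val < M then sub ⟨i.val, h⟩ else P) i)).2 j} ⊆
            {j : ℕ | j < w.toWord.length ∧
              ∀ i : Fin M, ¬ CoversPos ((sub i).1) j ∧ ¬ CoversPos ((sub i).2) j} := by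
          intro j hj
          refine ⟨hj.1, fun i => ?_⟩
          have hil : i.val < M := i.isLt
          have h2 := hj.2 ⟨i.val, lt_of_lt_of_le i.isLt hM⟩
          simp only [dif_pos hil, Fin.eta] at h2
          exact h2
        have hfin2 : {j : ℕ | j < w.toWord.length ∧
            ∀ i : Fin M, ¬ CoversPos ((sub i).1) j ∧ ¬ CoversPos ((sub i).2) j}.Finite :=
          (Set.finite_Iio (w.toWord.length)).subset fun j hj => hj.1
        exact_mod_cast Nat.cast_le.mpr (Set.ncard_le_ncard hst hfin2)
    rcases hw with hw | hw
    · exact pad N1 (le_max_left _ _) (hS1 w hw hw1)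
    · exact pad N2 (le_max_right _ _) (hS2 w hw hw2)
  · -- subsets
    rintro X Y hYX ⟨N, h⟩
    exact ⟨N, fun ε hε => (h ε hε).imp fun S hS w hw hwS => hS w (hYX hw) hwS⟩
  · -- univ is not negligible
    rintro ⟨N, hN⟩
    obtain ⟨S, hS⟩ := hN (1 / 2) (by norm_num)
    have hinj : Function.Injective
        (fun t : ℕ => FreeGroup.mk (NegAux.wk n (20 * N + 20 + t) hn)) := by
      intro s t hst
      have h1 := congrArg (fun w : FreeGroup (Fin n) => w.toWord.length) hst
      simp only [NegAux.toWord_wk hn, NegAux.wk_length hn] at h1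
      have h2 : 20 * N + 20 + s = 20 * N + 20 + t :=
        NegAux.Sb_strictMono.injective (by omega)
      omega
    have hex : ∃ t, FreeGroup.mk (NegAux.wk n (20 * N + 20 + t) hn) ∉ S := by
      by_contra hc
      push_neg at hc
      obtain ⟨s, t, hst, he⟩ := Finite.exists_ne_map_eq_of_infinite
        (fun t : ℕ => (⟨FreeGroup.mk (NegAux.wk n (20 * N + 20 + t) hn), hc t⟩ : S))
      exact hst (hinj (Subtype.ext_iff.mp he))
    obtain ⟨t, hwS⟩ := hex
    set k := 20 * N + 20 + t with hk
    set w := FreeGroup.mk (NegAux.wk n k hn) with hwdef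
    have htw : w.toWord = NegAux.wk n k hn := NegAux.toWord_wk hn
    have hm : w.toWord.length = NegAux.Sb k + 1 := by rw [htw, NegAux.wk_length hn]
    obtain ⟨sub, hc1, hc2, hc3, hc4⟩ := hS w (Set.mem_univ w) hwS
    have hlen : ∀ i, (sub i).1.2.length ≤ 2 * k + 2 ∧ (sub i).2.2.length ≤ 2 * k + 2 := by
      intro i
      obtain ⟨hp1, hp2⟩ := hc1 i
      rcases hc2 i with he | he
      · have hne : (sub i).1.1 ≠ (sub i).2.1 := by
          intro hpp
          exact hc3 i (Prod.ext_iff.mpr ⟨hpp, he.symm⟩)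
        have e1 : ((NegAux.wk n k hn).drop (sub i).1.1).take (sub i).1.2.length
            = (sub i).1.2 := by
          have h := hp1.1.2; rwa [htw] at h
        have e2 : ((NegAux.wk n k hn).drop (sub i).2.1).take (sub i).1.2.length
            = (sub i).1.2 := by
          have h := hp2.1.2; rw [he] at h; rwa [htw] at h
        have hb := NegAux.emb_len_le hn hne e1 e2
        exact ⟨hb, by rw [he]; exact hb⟩
      · exfalso
        obtain ⟨x, hx⟩ := List.exists_mem_of_ne_nil _ hp1.1.1
        have hxw : x ∈ w.toWord := by
          have h := hp1.1.2
          rw [← h] at hx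
          exact List.mem_of_mem_drop (List.mem_of_mem_take hx)
        have hxt : x.2 = true := by rw [htw] at hxw; exact NegAux.wk_snd hn hxw
        have hy : (x.1, !x.2) ∈ (sub i).2.2 := by
          rw [he]
          simp only [invWord, List.mem_reverse, List.mem_map]
          exact ⟨x, hx, rfl⟩
        have hyw : (x.1, !x.2) ∈ w.toWord := by
          have h := hp2.1.2
          rw [← h] at hy
          exact List.mem_of_mem_drop (List.mem_of_mem_take hy)
        have hyt : ((x.1, !x.2) : Fin n × Bool).2 = true := by
          rw [htw] at hyw; exact NegAux.wk_snd hn hyw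
        rw [hxt] at hyt
        simp at hyt
    set Cov : Finset ℕ := Finset.univ.biUnion (fun i : Fin N =>
      Finset.Ico (sub i).1.1 ((sub i).1.1 + (sub i).1.2.length) ∪
      Finset.Ico (sub i).2.1 ((sub i).2.1 + (sub i).2.2.length)) with hCovdef
    have hCov : Cov.card ≤ N * (4 * k + 4) := by
      refine le_trans Finset.card_biUnion_le ?_
      have hstep : ∀ i ∈ (Finset.univ : Finset (Fin N)),
          (Finset.Ico (sub i).1.1 ((sub i).1.1 + (sub i).1.2.length) ∪
            Finset.Ico (sub i).2.1 ((sub i).2.1 + (sub i).2.2.length)).card ≤ 4 * k + 4 := by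
        intro i _
        refine le_trans (Finset.card_union_le _ _) ?_
        have h := hlen i
        simp only [Nat.card_Ico]
        omega
      refine le_trans (Finset.sum_le_card_nsmul _ _ (4 * k + 4) hstep) ?_
      simp [mul_comm]
    set U := {j : ℕ | j < w.toWord.length ∧
      ∀ i, ¬ CoversPos ((sub i).1) j ∧ ¬ CoversPos ((sub i).2) j} with hU
    have hUfin : U.Finite := (Set.finite_Iio (w.toWord.length)).subset fun j hj => hj.1
    have hsub : ↑(Finset.range (NegAux.Sb k + 1) \ Cov) ⊆ U := by
      intro j hj
      simp only [Finset.coe_sdiff, Set.mem_diff, Finset.mem_coe, Finset.mem_range,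
        hCovdef, Finset.mem_biUnion, Finset.mem_union, Finset.mem_Ico, not_exists,
        not_or] at hj
      obtain ⟨hj1, hj2⟩ := hj
      refine ⟨by omega, fun i => ?_⟩
      have hj2' : ¬ ((sub i).1.1 ≤ j ∧ j < (sub i).1.1 + (sub i).1.2.length ∨
          (sub i).2.1 ≤ j ∧ j < (sub i).2.1 + (sub i).2.2.length) :=
        fun hcc => hj2 i ⟨Finset.mem_univ i, hcc⟩
      simp only [CoversPos]
      omega
    have hcard1 : (Finset.range (NegAux.Sb k + 1) \ Cov).card ≤ U.ncard := by
      rw [← Set.ncard_coe_finset]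
      exact Set.ncard_le_ncard hsub hUfin
    have hcard2 : NegAux.Sb k + 1 ≤ (Finset.range (NegAux.Sb k + 1) \ Cov).card + Cov.card := by
      have h := Finset.card_le_card_sdiff_add_card
        (s := Finset.range (NegAux.Sb k + 1)) (t := Cov)
      simpa using h
    rw [hm] at hc4
    have h2n : 2 * U.ncard ≤ NegAux.Sb k + 1 := by
      have h : (2 * U.ncard : ℝ) ≤ ((NegAux.Sb k + 1 : ℕ) : ℝ) := by
        push_cast at hc4 ⊢
        linarith
      exact_mod_cast h
    have h2S := NegAux.two_Sb k
    have hkk : (20 * N + 20) * k ≤ k * k := Nat.mul_le_mul_right k (by omega)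
    have e1 : (20 * N + 20) * k = 20 * (N * k) + 20 * k := by ring
    have e2 : N * (4 * k + 4) = 4 * (N * k) + 4 * N := by ring
    omega
end

section
/- Let F be a nonabelian free group of finite rank. If X ⊆ F is negligible and g ∈ F, then both the left translate g·X = {g·x : x ∈ X} and the right translate X·g = {x·g : x ∈ X} are negligible subsets of F. -/
open FirstOrder

namespace Aux
open FreeGroup List

variable {α : Type*} [DecidableEq α]

lemma invWord_eq_invRev (u : List (α × Bool)) : invWord u = FreeGroup.invRev u := rfl

@[simp] lemma invWord_length (u : List (α × Bool)) : (invWord u).length = u.length := by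
  simp [invWord]

@[simp] lemma invWord_invWord (u : List (α × Bool)) : invWord (invWord u) = u := by
  rw [invWord_eq_invRev, invWord_eq_invRev, FreeGroup.invRev_invRev]

lemma invWord_drop_take (v : List (α × Bool)) (p ℓ : ℕ) (h : p + ℓ ≤ v.length) :
    ((invWord v).drop (v.length - (p + ℓ))).take ℓ = invWord ((v.drop p).take ℓ) := by
  apply List.ext_getElem
  · simp; omega
  · intro i h1 h2
    simp only [List.length_take, List.length_drop, invWord, List.length_reverse,
      List.length_map] at h1 h2
    simp only [List.getElem_take, List.getElem_drop, invWord, List.getElem_reverse,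
      List.getElem_map, List.length_take, List.length_drop, List.length_map,
      List.length_reverse]
    have hidx : v.length - 1 - (v.length - (p + ℓ) + i)
        = p + (ℓ ⊓ (v.length - p) - 1 - i) := by omega
    simp only [hidx]

/-- The no-cancellation condition on adjacent letters. -/
def NC (a b : α × Bool) : Prop := ¬ (b.1 = a.1 ∧ b.2 = !a.2)

def Reduced (u : List (α × Bool)) : Prop := List.Chain' NC u

lemma reduced_reduce (L : List (α × Bool)) : Reduced (reduce L) := by
  induction L with
  | nil => exact List.isChain_nil
  | cons x L ih =>
    rw [reduce.cons]
    rcases h : reduce L with _ | ⟨hd, tl⟩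
    · exact List.isChain_singleton x
    · rw [h] at ih
      show Reduced (if x.1 = hd.1 ∧ x.2 = !hd.2 then tl else x :: hd :: tl)
      by_cases hc : x.1 = hd.1 ∧ x.2 = !hd.2
      · rw [if_pos hc]; exact ih.tail
      · simp only [if_neg hc]
        refine List.IsChain.cons_cons ?_ ih
        intro h'
        rcases h' with ⟨h1, h2⟩
        exact hc ⟨h1.symm, by rw [h2, Bool.not_not]⟩

lemma Reduced.reduce_eq {u : List (α × Bool)} (hu : Reduced u) : reduce u = u := by
  induction u with
  | nil => rfl
  | cons x L ih =>
    have hL : reduce L = L := ih hu.tail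
    rw [reduce.cons, hL]
    cases L with
    | nil => rfl
    | cons hd tl =>
      have hnc : NC x hd := List.isChain_cons_cons.1 hu |>.1
      show (if x.1 = hd.1 ∧ x.2 = !hd.2 then tl else x :: hd :: tl) = x :: hd :: tl
      rw [if_neg]
      intro ⟨h1, h2⟩
      exact hnc ⟨h1.symm, by rw [h2, Bool.not_not]⟩

lemma Reduced.toWord (x : FreeGroup α) : Reduced x.toWord := by
  have := reduced_reduce (x.toWord)
  rwa [FreeGroup.reduce_toWord] at this

lemma reduce_append : ∀ (u : List (α × Bool)), Reduced u → ∀ v : List (α × Bool), Reduced v →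
    ∃ k m, k ≤ u.length ∧ m ≤ u.length ∧ m ≤ v.length ∧
      reduce (u ++ v) = u.take k ++ v.drop m := by
  intro u
  induction u using List.reverseRecOn with
  | nil =>
    intro _ v hv
    exact ⟨0, 0, by simp [hv.reduce_eq]⟩
  | append_singleton u' a ih =>
    intro hu v hv
    cases v with
    | nil =>
      refine ⟨(u' ++ [a]).length, 0, le_rfl, by simp, by simp, ?_⟩
      simp [hu.reduce_eq]
    | cons b v' =>
      by_cases hc : b.1 = a.1 ∧ b.2 = !a.2
      · have hstep : FreeGroup.Red.Step ((u' ++ [a]) ++ (b :: v')) (u' ++ v') := by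
          have : (u' ++ [a]) ++ (b :: v') = u' ++ (a.1, a.2) :: (a.1, !a.2) :: v' := by
            simp only [List.append_assoc, List.singleton_append]
            rcases a with ⟨a1, a2⟩; rcases b with ⟨b1, b2⟩
            obtain ⟨h1, h2⟩ := hc
            simp_all
          rw [this]
          exact FreeGroup.Red.Step.not
        have hred : reduce ((u' ++ [a]) ++ (b :: v')) = reduce (u' ++ v') :=
          FreeGroup.reduce.Step.eq hstep
        obtain ⟨k, m, hk, hm, hmv, heq⟩ := ih (hu.prefix (List.prefix_append u' [a]))
          v' hv.tail
        refine ⟨k, m + 1, ?_, ?_, ?_, ?_⟩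
        · simpa using hk.trans (by simp)
        · simp; omega
        · simpa using hmv
        · rw [hred, heq]
          congr 1
          rw [List.take_append_of_le_length hk]
      · have hred : Reduced ((u' ++ [a]) ++ (b :: v')) := by
          apply List.isChain_append.2
          refine ⟨hu, hv, ?_⟩
          intro x hx y hy
          rw [List.getLast?_concat] at hx
          simp only [List.head?_cons, Option.mem_some_iff] at hx hy
          subst hx; subst hy
          exact hc
        refine ⟨(u' ++ [a]).length, 0, le_rfl, by simp, by simp, ?_⟩
        rw [hred.reduce_eq, List.take_length, List.drop_zero]

lemma toWord_mul_structure (g x : FreeGroup α) :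
    ∃ k m, k ≤ g.toWord.length ∧ m ≤ g.toWord.length ∧ m ≤ x.toWord.length ∧
      (g * x).toWord = g.toWord.take k ++ x.toWord.drop m := by
  obtain ⟨k, m, hk, hm, hmv, heq⟩ :=
    reduce_append g.toWord (Reduced.toWord g) x.toWord (Reduced.toWord x)
  refine ⟨k, m, hk, hm, hmv, ?_⟩
  have : g * x = FreeGroup.mk (g.toWord ++ x.toWord) := by
    rw [← FreeGroup.mul_mk, FreeGroup.mk_toWord, FreeGroup.mk_toWord]
  rw [this, FreeGroup.toWord_mk, heq]

lemma embedded_bounds {w : FreeGroup α} {s : ℕ × List (α × Bool)}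
    (h : IsEmbeddedSubword w s) : s.1 + s.2.length ≤ w.toWord.length := by
  obtain ⟨hne, heq⟩ := h
  have := congrArg List.length heq
  simp only [List.length_take, List.length_drop] at this
  have hlen : s.2.length ≠ 0 := fun h0 => hne (List.eq_nil_of_length_eq_zero h0)
  omega

lemma embedded_trim {w : FreeGroup α} {p : ℕ} {u : List (α × Bool)}
    (h : IsEmbeddedSubword w (p, u)) (A ℓ : ℕ) (hℓ : ℓ ≠ 0) (hA : A + ℓ ≤ u.length) :
    IsEmbeddedSubword w (p + A, (u.drop A).take ℓ) := by
  obtain ⟨hne, heq⟩ := h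
  have hlt : (u.drop A).take ℓ ≠ [] := by
    intro h0
    have := congrArg List.length h0
    simp only [List.length_take, List.length_drop, List.length_nil] at this
    omega
  refine ⟨hlt, ?_⟩
  have hlen : ((u.drop A).take ℓ).length = ℓ := by
    simp only [List.length_take, List.length_drop]; omega
  rw [hlen]
  have h1 : w.toWord.drop (p + A) = (w.toWord.drop p).drop A := by
    rw [List.drop_drop]
  rw [h1]
  have h2 : ((w.toWord.drop p).drop A).take ℓ = (((w.toWord.drop p).take u.length).drop A).take ℓ := by
    rw [List.drop_take, List.take_take]
    congr 1
    omega
  rw [h2, heq]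

lemma embedded_reduced {w : FreeGroup α} {s : ℕ × List (α × Bool)}
    (h : IsEmbeddedSubword w s) : Reduced s.2 := by
  obtain ⟨_, heq⟩ := h
  rw [← heq]
  exact (Reduced.toWord w).infix ((List.take_prefix _ _).isInfix.trans
    (List.drop_suffix _ _).isInfix)

lemma Reduced.ne_invWord {z : List (α × Bool)} (hz : Reduced z) (hne : z ≠ []) :
    z ≠ invWord z := by
  intro h
  have hlen : z.length ≠ 0 := fun h0 => hne (List.eq_nil_of_length_eq_zero h0)
  have hget : ∀ i (hi : i < z.length),
      z[i] = ((z[z.length - 1 - i]'(by omega)).1, !(z[z.length - 1 - i]'(by omega)).2) := by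
    intro i hi
    rw [List.getElem_of_eq h hi]
    simp [invWord]
  rcases Nat.even_or_odd z.length with ⟨c, hc⟩ | ⟨c, hc⟩
  · -- even: positions c - 1 and c are adjacent and inverse
    have hc1 : 1 ≤ c := by omega
    have hi1 : (c - 1) + 1 < z.length := by omega
    have hrel := (List.isChain_iff_getElem.1 hz) (c - 1) (by omega)
    have h1 := hget (c - 1) (by omega)
    have hcompl : z.length - 1 - (c - 1) = (c - 1) + 1 := by omega
    simp only [hcompl] at h1
    exact hrel ⟨(congrArg Prod.fst h1).symm,
      by have := congrArg Prod.snd h1; simp only at this; rw [this, Bool.not_not]⟩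
  · have hi : c < z.length := by omega
    have h1 := hget c (by omega)
    have hcompl : z.length - 1 - c = c := by omega
    simp only [hcompl] at h1
    simpa using congrArg Prod.snd h1

instance coversPosDecidable {β : Type*} (s : ℕ × List (β × Bool)) (j : ℕ) :
    Decidable (CoversPos s j) :=
  inferInstanceAs (Decidable (_ ≤ _ ∧ _ < _))

def covF {β : Type*} (s : ℕ × List (β × Bool)) : Finset ℕ :=
  Finset.Ico s.1 (s.1 + s.2.length)

lemma mem_covF {β : Type*} {s : ℕ × List (β × Bool)} {j : ℕ} :
    j ∈ covF s ↔ CoversPos s j := by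
  simp [covF, CoversPos, Finset.mem_Ico]

@[simp] lemma card_covF {β : Type*} (s : ℕ × List (β × Bool)) :
    (covF s).card = s.2.length := by
  simp [covF]

def uncovF {β : Type*} (L : ℕ) {N : ℕ}
    (sub : Fin N → (ℕ × List (β × Bool)) × (ℕ × List (β × Bool))) : Finset ℕ :=
  (Finset.range L).filter
    (fun j => ∀ i, ¬ CoversPos ((sub i).1) j ∧ ¬ CoversPos ((sub i).2) j)

lemma uncov_set_eq {β : Type*} (L : ℕ) {N : ℕ}
    (sub : Fin N → (ℕ × List (β × Bool)) × (ℕ × List (β × Bool))) :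
    {j : ℕ | j < L ∧ ∀ i, ¬ CoversPos ((sub i).1) j ∧ ¬ CoversPos ((sub i).2) j}
      = ↑(uncovF L sub) := by
  ext j
  simp [uncovF, Finset.mem_filter, Finset.mem_range]

lemma uncov_ncard {β : Type*} (L : ℕ) {N : ℕ}
    (sub : Fin N → (ℕ × List (β × Bool)) × (ℕ × List (β × Bool))) :
    {j : ℕ | j < L ∧ ∀ i, ¬ CoversPos ((sub i).1) j ∧ ¬ CoversPos ((sub i).2) j}.ncard
      = (uncovF L sub).card := by
  rw [uncov_set_eq, Set.ncard_coe_finset]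

lemma finite_short [Finite α] (B : ℕ) :
    {w : FreeGroup α | w.toWord.length ≤ B}.Finite := by
  classical
  have : {w : FreeGroup α | w.toWord.length ≤ B}
      ⊆ FreeGroup.toWord ⁻¹' {l : List (α × Bool) | l.length ≤ B} := fun w hw => hw
  exact Set.Finite.subset
    ((List.finite_length_le (α × Bool) B).preimage FreeGroup.toWord_injective.injOn) this

lemma pair_trim (x : FreeGroup α) (R : ℕ)
    (s s' : ℕ × List (α × Bool))
    (h1 : IsEmbeddedSubword x s) (h2 : IsEmbeddedSubword x s')
    (hrel : s'.2 = s.2 ∨ s'.2 = invWord s.2) (hne : s ≠ s')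
    (hbig : 2 * R < s.2.length) :
    ∃ t t' : ℕ × List (α × Bool),
      IsEmbeddedSubword x t ∧ IsEmbeddedSubword x t' ∧
      (t'.2 = t.2 ∨ t'.2 = invWord t.2) ∧ t ≠ t' ∧
      R ≤ t.1 ∧ R ≤ t'.1 ∧
      s.2.length ≤ t.2.length + 2 * R ∧
      t'.2.length = t.2.length ∧
      covF t ⊆ covF s ∧ covF t' ⊆ covF s' := by
  obtain ⟨p, u⟩ := s
  obtain ⟨p', u'⟩ := s'
  simp only at hrel hbig ⊢
  set len := u.length with hlendef
  have hlen' : u'.length = len := by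
    rcases hrel with h | h <;> rw [h] <;> simp [hlendef]
  set t₁ := min len (R - min p R) with ht₁def
  set t₂ := min len (R - min p' R) with ht₂def
  have ht₁R : t₁ ≤ R := by omega
  have ht₂R : t₂ ≤ R := by omega
  have hkey1 : R ≤ p + t₁ := by omega
  have hkey2 : R ≤ p' + t₂ := by omega
  rcases hrel with hrel | hrel
  · -- equal case
    set a := max t₁ t₂ with hadef
    set ℓ := len - a with hℓdef
    have ha : a < len := by omega
    have hℓ0 : ℓ ≠ 0 := by omega
    refine ⟨(p + a, (u.drop a).take ℓ), (p' + a, (u'.drop a).take ℓ),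
      embedded_trim h1 a ℓ hℓ0 (by omega),
      embedded_trim h2 a ℓ hℓ0 (by omega), ?_, ?_, by omega, by omega, ?_, ?_, ?_, ?_⟩
    · left; rw [hrel]
    · intro hcon
      have hp : p + a = p' + a := congrArg Prod.fst hcon
      have : p = p' := by omega
      exact hne (by rw [this, hrel])
    · simp only [List.length_take, List.length_drop]; omega
    · simp only [List.length_take, List.length_drop]; omega
    · apply Finset.Ico_subset_Ico (by omega)
      simp only [List.length_take, List.length_drop]; omega
    · apply Finset.Ico_subset_Ico (by omega)
      simp only [List.length_take, List.length_drop]; omega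
  · -- inverse case
    set ℓ := len - t₁ - t₂ with hℓdef
    have hℓ0 : ℓ ≠ 0 := by omega
    have hiw : (u'.drop t₂).take ℓ = invWord ((u.drop t₁).take ℓ) := by
      rw [hrel]
      rw [← invWord_drop_take u t₁ ℓ (by omega)]
      congr 2
      omega
    refine ⟨(p + t₁, (u.drop t₁).take ℓ), (p' + t₂, (u'.drop t₂).take ℓ),
      embedded_trim h1 t₁ ℓ hℓ0 (by omega),
      embedded_trim h2 t₂ ℓ hℓ0 (by omega), ?_, ?_, by omega, by omega, ?_, ?_, ?_, ?_⟩
    · right; exact hiw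
    · intro hcon
      have hz : (u.drop t₁).take ℓ = invWord ((u.drop t₁).take ℓ) :=
        (congrArg Prod.snd hcon).trans hiw
      have hred : Reduced ((u.drop t₁).take ℓ) :=
        embedded_reduced (embedded_trim h1 t₁ ℓ hℓ0 (by omega))
      have hnil : (u.drop t₁).take ℓ ≠ [] := by
        intro h0
        have := congrArg List.length h0
        simp only [List.length_take, List.length_drop, List.length_nil] at this
        omega
      exact hred.ne_invWord hnil hz
    · simp only [List.length_take, List.length_drop]; omega
    · simp only [List.length_take, List.length_drop]; omega
    · apply Finset.Ico_subset_Ico (by omega)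
      simp only [List.length_take, List.length_drop]; omega
    · apply Finset.Ico_subset_Ico (by omega)
      simp only [List.length_take, List.length_drop]; omega

lemma inv_embed {x : FreeGroup α} {p : ℕ} {z : List (α × Bool)}
    (h : IsEmbeddedSubword x (p, z)) :
    IsEmbeddedSubword x⁻¹ (x.toWord.length - (p + z.length), invWord z) := by
  obtain ⟨hne, heq⟩ := h
  have hb : p + z.length ≤ x.toWord.length := embedded_bounds ⟨hne, heq⟩
  refine ⟨?_, ?_⟩
  · intro h0
    have := congrArg List.length h0
    simp only [invWord_length, List.length_nil] at this
    exact hne (List.eq_nil_of_length_eq_zero this)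
  · show ((x⁻¹.toWord.drop _).take (invWord z).length) = invWord z
    rw [FreeGroup.toWord_inv, ← invWord_eq_invRev, invWord_length]
    rw [invWord_drop_take x.toWord p z.length hb]
    simp only at heq
    rw [heq]

lemma negligible_inv {X : Set (FreeGroup α)} (hX : Negligible X) :
    Negligible (Inv.inv '' X) := by
  classical
  obtain ⟨N, hN⟩ := hX
  refine ⟨N, fun ε hε => ?_⟩
  obtain ⟨S, hS⟩ := hN ε hε
  refine ⟨S.image (·⁻¹), ?_⟩
  rintro w ⟨x, hxX, rfl⟩ hwS
  have hxS : x ∉ S := fun h => hwS (Finset.mem_image_of_mem _ h)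
  obtain ⟨sub, hprop, hrel, hne, hcount⟩ := hS x hxX hxS
  set L := x.toWord.length with hLdef
  have hLw : (x⁻¹).toWord.length = L := by
    rw [FreeGroup.toWord_inv, FreeGroup.invRev_length]
  set τ : ℕ × List (α × Bool) → ℕ × List (α × Bool) :=
    fun s => (L - (s.1 + s.2.length), invWord s.2) with hτdef
  have hbnd : ∀ i, (sub i).1.1 + (sub i).1.2.length ≤ L
      ∧ (sub i).2.1 + (sub i).2.2.length ≤ L := fun i =>
    ⟨embedded_bounds (hprop i).1.1, embedded_bounds (hprop i).2.1⟩
  refine ⟨fun i => (τ (sub i).1, τ (sub i).2), ?_, ?_, ?_, ?_⟩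
  · intro i
    constructor
    · refine ⟨inv_embed (hprop i).1.1, ?_⟩
      simp only [hτdef, invWord_length, hLw]
      exact (hprop i).1.2
    · refine ⟨inv_embed (hprop i).2.1, ?_⟩
      simp only [hτdef, invWord_length, hLw]
      exact (hprop i).2.2
  · intro i
    rcases hrel i with h | h
    · left; simp only [hτdef]; rw [h]
    · right; simp only [hτdef]; rw [h, invWord_invWord]
  · intro i hcon
    simp only [hτdef, Prod.mk.injEq] at hcon
    obtain ⟨hpos, hword⟩ := hcon
    have hw2 : (sub i).1.2 = (sub i).2.2 := by
      rw [← invWord_invWord (sub i).1.2, hword, invWord_invWord]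
    have hlen2 : (sub i).1.2.length = (sub i).2.2.length := by rw [hw2]
    have hb1 := (hbnd i).1
    have hb2 := (hbnd i).2
    have hp : (sub i).1.1 = (sub i).2.1 := by omega
    exact hne i (Prod.ext hp hw2)
  · rw [uncov_ncard]
    have hsubset : uncovF ((x⁻¹).toWord.length) (fun i => (τ (sub i).1, τ (sub i).2))
        ⊆ (uncovF L sub).image (fun t => L - 1 - t) := by
      intro j hj
      simp only [uncovF, Finset.mem_filter, Finset.mem_range] at hj
      obtain ⟨hjL, hjunc⟩ := hj
      rw [hLw] at hjL
      simp only [Finset.mem_image]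
      refine ⟨L - 1 - j, ?_, by omega⟩
      simp only [uncovF, Finset.mem_filter, Finset.mem_range]
      refine ⟨by omega, fun i => ?_⟩
      obtain ⟨hb1, hb2⟩ := hbnd i
      obtain ⟨hc1, hc2⟩ := hjunc i
      constructor
      · intro ⟨hcov1, hcov2⟩
        exact hc1 ⟨by simp only [hτdef]; omega, by simp only [hτdef, invWord_length]; omega⟩
      · intro ⟨hcov1, hcov2⟩
        exact hc2 ⟨by simp only [hτdef]; omega, by simp only [hτdef, invWord_length]; omega⟩
    calc ((uncovF ((x⁻¹).toWord.length) _).card : ℝ)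
        ≤ ((uncovF L sub).image (fun t => L - 1 - t)).card := by
          exact_mod_cast Finset.card_le_card hsubset
      _ ≤ (uncovF L sub).card := by exact_mod_cast Finset.card_image_le
      _ ≤ ε * L := by rw [← uncov_ncard]; exact hcount
      _ = ε * (x⁻¹).toWord.length := by rw [hLw]

set_option maxHeartbeats 1000000 in
lemma negligible_smul [Fintype α] {X : Set (FreeGroup α)} (hX : Negligible X)
    (g : FreeGroup α) : Negligible ((fun x => g * x) '' X) := by
  classical
  obtain ⟨N, hN⟩ := hX
  refine ⟨N, fun ε hε => ?_⟩
  have hε' : (0:ℝ) < min ε 1 / 2 := by positivity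
  obtain ⟨S, hS⟩ := hN (min ε 1 / 2) hε'
  set G := g.toWord.length with hGdef
  set R := G + 1 with hRdef
  obtain ⟨B₀, hB₀⟩ := exists_nat_ge ((2 * G + 4 * R * N + 2) * 2 / ε)
  set B := max B₀ (8 * N * R + G) with hBdef
  refine ⟨S.image (fun x => g * x) ∪ ((finite_short (α := α) B).toFinset), ?_⟩
  rintro w ⟨x, hxX, rfl⟩ hwS
  have hxS : x ∉ S := fun h =>
    hwS (Finset.mem_union_left _ (Finset.mem_image_of_mem _ h))
  have hlong : B < (g * x).toWord.length := by
    by_contra h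
    push_neg at h
    exact hwS (Finset.mem_union_right _ ((finite_short B).mem_toFinset.2 h))
  obtain ⟨sub, hprop, hrel, hne, hcount⟩ := hS x hxX hxS
  obtain ⟨k, m, hk, hm, hmv, hword⟩ := toWord_mul_structure g x
  set v := x.toWord with hvdef
  set W := (g * x).toWord.length with hWdef
  have hdrop : (g * x).toWord.drop k = v.drop m := by
    rw [hword, List.drop_left' (by simp [List.length_take]; omega)]
  have hWlen : W = k + (v.length - m) := by
    rw [hWdef, hword]
    simp only [List.length_append, List.length_take, List.length_drop]
    omega
  have hBge : 8 * N * R + G ≤ B := le_max_right _ _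
  have hvlen : 8 * N * R < v.length := by omega
  have hlen2 : ∀ i, (sub i).2.2.length = (sub i).1.2.length := by
    intro i
    rcases hrel i with h | h <;> rw [h] <;> simp
  have hcount' : ((uncovF v.length sub).card : ℝ) ≤ (min ε 1 / 2) * v.length := by
    rw [← uncov_ncard]; exact hcount
  -- there is a long pair
  have hgood : ∃ i₀ : Fin N, 2 * R < (sub i₀).1.2.length := by
    by_contra hno
    push_neg at hno
    have hcover : Finset.range v.length ⊆
        uncovF v.length sub ∪
          Finset.univ.biUnion (fun i => covF (sub i).1 ∪ covF (sub i).2) := by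
      intro j hj
      by_cases hc : ∀ i, ¬ CoversPos ((sub i).1) j ∧ ¬ CoversPos ((sub i).2) j
      · exact Finset.mem_union_left _
          (Finset.mem_filter.2 ⟨hj, fun i => hc i⟩)
      · have hex : ∃ i, CoversPos ((sub i).1) j ∨ CoversPos ((sub i).2) j := by
          by_contra h2
          push_neg at h2
          exact hc fun i => ⟨(h2 i).1, (h2 i).2⟩
        obtain ⟨i, hi⟩ := hex
        refine Finset.mem_union_right _ (Finset.mem_biUnion.2 ⟨i, Finset.mem_univ i, ?_⟩)
        rcases hi with hi | hi
        · exact Finset.mem_union_left _ (mem_covF.2 hi)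
        · exact Finset.mem_union_right _ (mem_covF.2 hi)
    have hcard1 : v.length ≤ (uncovF v.length sub).card + N * (4 * R) := by
      have h0 := Finset.card_le_card hcover
      rw [Finset.card_range] at h0
      have h1 := Finset.card_union_le (uncovF v.length sub)
        (Finset.univ.biUnion (fun i => covF (sub i).1 ∪ covF (sub i).2))
      have h2 := Finset.card_biUnion_le (s := (Finset.univ : Finset (Fin N)))
        (t := fun i => covF (sub i).1 ∪ covF (sub i).2)
      have h3 : ∀ i ∈ (Finset.univ : Finset (Fin N)),
          (covF (sub i).1 ∪ covF (sub i).2).card ≤ 4 * R := by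
        intro i _
        have := Finset.card_union_le (covF (sub i).1) (covF (sub i).2)
        have hl1 := hno i
        have hl2 := hlen2 i
        simp only [card_covF] at this
        omega
      have h4 := Finset.sum_le_card_nsmul (Finset.univ : Finset (Fin N)) _ (4 * R) h3
      simp only [Finset.card_univ, Fintype.card_fin, smul_eq_mul] at h4
      omega
    have hhalf : (min ε 1 / 2) * v.length ≤ (1/2 : ℝ) * v.length := by
      apply mul_le_mul_of_nonneg_right _ (by positivity)
      have : min ε 1 ≤ 1 := min_le_right _ _
      linarith
    have : (v.length : ℝ) ≤ (1/2) * v.length + N * (4 * R) := by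
      have hc1 : (v.length : ℝ) ≤ ((uncovF v.length sub).card : ℝ) + N * (4 * R) := by
        exact_mod_cast hcard1
      linarith
    have hv' : (v.length : ℝ) ≤ 8 * N * R := by linarith
    have : (8 * N * R : ℝ) < v.length := by exact_mod_cast hvlen
    linarith
  obtain ⟨i₀, hi₀⟩ := hgood
  have hchoice : ∀ i : Fin N, ∃ tp : (ℕ × List (α × Bool)) × (ℕ × List (α × Bool)),
      IsEmbeddedSubword x tp.1 ∧ IsEmbeddedSubword x tp.2 ∧
      (tp.2.2 = tp.1.2 ∨ tp.2.2 = invWord tp.1.2) ∧ tp.1 ≠ tp.2 ∧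
      R ≤ tp.1.1 ∧ R ≤ tp.2.1 ∧ tp.2.2.length = tp.1.2.length ∧
      (2 * R < (sub i).1.2.length →
        ((sub i).1.2.length ≤ tp.1.2.length + 2 * R ∧
          covF tp.1 ⊆ covF (sub i).1 ∧ covF tp.2 ⊆ covF (sub i).2)) := by
    intro i
    by_cases hb : 2 * R < (sub i).1.2.length
    · obtain ⟨t, t', he1, he2, hr, hnt, hR1, hR2, hlb, hleq, hc1, hc2⟩ :=
        pair_trim x R (sub i).1 (sub i).2 (hprop i).1.1 (hprop i).2.1 (hrel i) (hne i) hb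
      exact ⟨(t, t'), he1, he2, hr, hnt, hR1, hR2, hleq, fun _ => ⟨hlb, hc1, hc2⟩⟩
    · obtain ⟨t, t', he1, he2, hr, hnt, hR1, hR2, hlb, hleq, hc1, hc2⟩ :=
        pair_trim x R (sub i₀).1 (sub i₀).2 (hprop i₀).1.1 (hprop i₀).2.1 (hrel i₀) (hne i₀) hi₀
      exact ⟨(t, t'), he1, he2, hr, hnt, hR1, hR2, hleq, fun hcon => absurd hcon hb⟩
  choose newSub hemb1 hemb2 hnrel hnne hR1 hR2 hnlen2 hgoodprop using hchoice
  have hshift : ∀ (q : ℕ) (z : List (α × Bool)), IsEmbeddedSubword x (q, z) → R ≤ q →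
      IsProperEmbeddedSubword (g * x) (q - m + k, z) := by
    intro q z hz hq
    have hbz : q + z.length ≤ v.length := embedded_bounds hz
    obtain ⟨hz1, hz2⟩ := hz
    have hzlen : z.length ≠ 0 := fun h0 => hz1 (List.eq_nil_of_length_eq_zero h0)
    refine ⟨⟨hz1, ?_⟩, ?_⟩
    · show (((g * x).toWord.drop (q - m + k)).take z.length) = z
      have hdd : (g * x).toWord.drop (q - m + k) = v.drop q := by
        rw [show q - m + k = k + (q - m) by omega, ← List.drop_drop, hdrop,
          List.drop_drop]
        congr 1
        omega
      rw [hdd]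
      exact hz2
    · show z.length < W
      omega
  refine ⟨fun i => (((newSub i).1.1 - m + k, (newSub i).1.2),
      ((newSub i).2.1 - m + k, (newSub i).2.2)), ?_, ?_, ?_, ?_⟩
  · intro i
    exact ⟨hshift _ _ (by simpa using hemb1 i) (hR1 i),
      hshift _ _ (by simpa using hemb2 i) (hR2 i)⟩
  · intro i
    exact hnrel i
  · intro i hcon
    simp only [Prod.mk.injEq] at hcon
    obtain ⟨hq, hz⟩ := hcon
    have hq1 := hR1 i
    have hq2 := hR2 i
    apply hnne i
    have hpos : (newSub i).1.1 = (newSub i).2.1 := by omega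
    exact Prod.ext hpos hz
  · -- counting
    rw [uncov_ncard]
    set Bad : Fin N → Finset ℕ := fun i =>
      (covF (sub i).1 \ covF (newSub i).1) ∪ (covF (sub i).2 \ covF (newSub i).2)
      with hBaddef
    have hBadcard : ∀ i, (Bad i).card ≤ 4 * R := by
      intro i
      show ((covF (sub i).1 \ covF (newSub i).1)
        ∪ (covF (sub i).2 \ covF (newSub i).2)).card ≤ 4 * R
      have hcu := Finset.card_union_le (covF (sub i).1 \ covF (newSub i).1)
        (covF (sub i).2 \ covF (newSub i).2)
      by_cases hb : 2 * R < (sub i).1.2.length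
      · obtain ⟨hlb, hc1, hc2⟩ := hgoodprop i hb
        have hs1 : (covF (sub i).1 \ covF (newSub i).1).card
            = (sub i).1.2.length - (newSub i).1.2.length := by
          rw [Finset.card_sdiff_of_subset hc1, card_covF, card_covF]
        have hs2 : (covF (sub i).2 \ covF (newSub i).2).card
            = (sub i).2.2.length - (newSub i).2.2.length := by
          rw [Finset.card_sdiff_of_subset hc2, card_covF, card_covF]
        have hl2 := hlen2 i
        have hnl2 := hnlen2 i
        omega
      · have hs1 : (covF (sub i).1 \ covF (newSub i).1).card ≤ (sub i).1.2.length := by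
          calc _ ≤ (covF (sub i).1).card := Finset.card_le_card (Finset.sdiff_subset)
          _ = _ := card_covF _
        have hs2 : (covF (sub i).2 \ covF (newSub i).2).card ≤ (sub i).2.2.length := by
          calc _ ≤ (covF (sub i).2).card := Finset.card_le_card (Finset.sdiff_subset)
          _ = _ := card_covF _
        have hl2 := hlen2 i
        omega
    set sub' : Fin N → (ℕ × List (α × Bool)) × (ℕ × List (α × Bool)) := fun i =>
      (((newSub i).1.1 - m + k, (newSub i).1.2),
        ((newSub i).2.1 - m + k, (newSub i).2.2)) with hsub'def
    have hmain : uncovF W sub' ⊆ Finset.range k ∪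
        (uncovF v.length sub ∪ Finset.univ.biUnion Bad).image (fun t => t - m + k) := by
      intro j hj
      simp only [uncovF, Finset.mem_filter, Finset.mem_range] at hj
      obtain ⟨hjW, hjunc⟩ := hj
      by_cases hjk : j < k
      · exact Finset.mem_union_left _ (Finset.mem_range.2 hjk)
      · push_neg at hjk
        set t := j - k + m with htdef
        have hjt : t - m + k = j := by omega
        refine Finset.mem_union_right _ (Finset.mem_image.2 ⟨t, ?_, hjt⟩)
        by_cases hc : ∀ i, ¬ CoversPos ((sub i).1) t ∧ ¬ CoversPos ((sub i).2) t
        · refine Finset.mem_union_left _ (Finset.mem_filter.2 ⟨?_, fun i => hc i⟩)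
          rw [Finset.mem_range]
          omega
        · have hex : ∃ i, CoversPos ((sub i).1) t ∨ CoversPos ((sub i).2) t := by
            by_contra h2
            push_neg at h2
            exact hc fun i => ⟨(h2 i).1, (h2 i).2⟩
          obtain ⟨i, hi⟩ := hex
          refine Finset.mem_union_right _ (Finset.mem_biUnion.2 ⟨i, Finset.mem_univ i, ?_⟩)
          rcases hi with hi | hi
          · refine Finset.mem_union_left _ (Finset.mem_sdiff.2 ⟨mem_covF.2 hi, ?_⟩)
            intro hmem
            have hc1 := mem_covF.1 hmem
            obtain ⟨ha1, ha2⟩ := hc1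
            have hq := hR1 i
            refine (hjunc i).1 ⟨?_, ?_⟩
            · show (newSub i).1.1 - m + k ≤ j
              omega
            · show j < (newSub i).1.1 - m + k + (newSub i).1.2.length
              omega
          · refine Finset.mem_union_right _ (Finset.mem_sdiff.2 ⟨mem_covF.2 hi, ?_⟩)
            intro hmem
            have hc2 := mem_covF.1 hmem
            obtain ⟨ha1, ha2⟩ := hc2
            have hq := hR2 i
            refine (hjunc i).2 ⟨?_, ?_⟩
            · show (newSub i).2.1 - m + k ≤ j
              omega
            · show j < (newSub i).2.1 - m + k + (newSub i).2.2.length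
              omega
    have hcard : (uncovF W sub').card ≤ k + ((uncovF v.length sub).card + N * (4 * R)) := by
      have h0 := Finset.card_le_card hmain
      have h1 := Finset.card_union_le (Finset.range k)
        ((uncovF v.length sub ∪ Finset.univ.biUnion Bad).image (fun t => t - m + k))
      have h2 := Finset.card_image_le (s := uncovF v.length sub ∪ Finset.univ.biUnion Bad)
        (f := fun t => t - m + k)
      have h3 := Finset.card_union_le (uncovF v.length sub) (Finset.univ.biUnion Bad)
      have h4 := Finset.card_biUnion_le (s := (Finset.univ : Finset (Fin N))) (t := Bad)
      have h5 := Finset.sum_le_card_nsmul (Finset.univ : Finset (Fin N)) _ (4 * R)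
        (fun i _ => hBadcard i)
      simp only [Finset.card_univ, Fintype.card_fin, smul_eq_mul, Finset.card_range] at *
      omega
    -- final real arithmetic
    have hWB : (B : ℝ) < W := by exact_mod_cast hlong
    have hB₀B : (B₀ : ℝ) ≤ B := by exact_mod_cast le_max_left B₀ (8 * N * R + G)
    have hvW : (v.length : ℝ) ≤ W + G := by
      have : v.length ≤ W + G := by omega
      exact_mod_cast this
    have hminε : min ε 1 ≤ ε := min_le_left _ _
    have hmin1 : min ε 1 ≤ 1 := min_le_right _ _
    have hkG : (k : ℝ) ≤ G := by exact_mod_cast hk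
    have hcardR : ((uncovF W sub').card : ℝ)
        ≤ k + ((uncovF v.length sub).card + N * (4 * R)) := by exact_mod_cast hcard
    have hWpos : (0:ℝ) ≤ W := by positivity
    have hstep : ((uncovF W sub').card : ℝ)
        ≤ G + ((min ε 1 / 2) * v.length + N * (4 * R)) := by
      calc ((uncovF W sub').card : ℝ)
          ≤ k + ((uncovF v.length sub).card + N * (4 * R)) := hcardR
        _ ≤ G + ((min ε 1 / 2) * v.length + N * (4 * R)) := by linarith
    have hvsplit : (min ε 1 / 2) * v.length ≤ (ε / 2) * W + G := by
      have h1 : (min ε 1 / 2) * v.length ≤ (min ε 1 / 2) * (W + G) := by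
        apply mul_le_mul_of_nonneg_left hvW (by positivity)
      have h2 : (min ε 1 / 2) * (W + G) ≤ (ε/2) * W + (1/2) * G := by
        have hGpos : (0:ℝ) ≤ G := by positivity
        have := mul_le_mul_of_nonneg_right hminε hWpos
        have := mul_le_mul_of_nonneg_right hmin1 hGpos
        nlinarith
      have hGpos : (0:ℝ) ≤ G := by positivity
      linarith
    have hB₀ineq : (2 * G + 4 * R * N + 2 : ℝ) ≤ (ε / 2) * W := by
      have hεW : (2 * G + 4 * R * N + 2 : ℝ) * 2 / ε ≤ W := by
        calc (2 * G + 4 * R * N + 2 : ℝ) * 2 / ε ≤ B₀ := hB₀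
          _ ≤ B := hB₀B
          _ ≤ W := le_of_lt hWB
      rw [div_le_iff₀ hε] at hεW
      nlinarith
    calc ((uncovF W sub').card : ℝ)
        ≤ G + ((min ε 1 / 2) * v.length + N * (4 * R)) := hstep
      _ ≤ G + (((ε / 2) * W + G) + N * (4 * R)) := by linarith
      _ = (2 * G + 4 * R * N) + (ε / 2) * W := by ring
      _ ≤ (ε / 2) * W + (ε / 2) * W := by linarith
      _ = ε * W := by ring

end Aux

/-- Left and right translates of a negligible subset of a nonabelian free group of finite
rank are negligible. -/
theorem negligible_translate (n : ℕ) (hn : 2 ≤ n) (X : Set (FreeGroup (Fin n)))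
    (hX : Negligible X) (g : FreeGroup (Fin n)) :
    Negligible ((fun x => g * x) '' X) ∧ Negligible ((fun x => x * g) '' X) := by
  constructor
  · exact Aux.negligible_smul hX g
  · have h1 : Negligible (Inv.inv '' X) := Aux.negligible_inv hX
    have h2 := Aux.negligible_smul h1 g⁻¹
    have h3 := Aux.negligible_inv h2
    have heq : Inv.inv '' ((fun x => g⁻¹ * x) '' (Inv.inv '' X))
        = (fun x => x * g) '' X := by
      ext w
      constructor
      · rintro ⟨y, ⟨z, ⟨u, huX, rfl⟩, rfl⟩, rfl⟩
        exact ⟨u, huX, by simp [mul_inv_rev]⟩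
      · rintro ⟨u, huX, rfl⟩
        exact ⟨g⁻¹ * u⁻¹, ⟨u⁻¹, ⟨u, huX, rfl⟩, rfl⟩, by simp [mul_inv_rev]⟩
    rw [heq] at h3
    exact h3
end

section
/- Let F be a nonabelian free group of finite rank. Then every cyclic subgroup of F (the subgroup generated by a single element of F) is a negligible subset of F. -/
open FirstOrder

namespace NegligibleAux

variable {α : Type*} [DecidableEq α]

/-- A word is reduced: no adjacent cancelling pair. -/
def Reduced (L : List (α × Bool)) : Prop :=
  List.Chain' (fun x y => ¬(x.1 = y.1 ∧ x.2 = !y.2)) L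

theorem reduce_eq_self {L : List (α × Bool)} (h : Reduced L) : FreeGroup.reduce L = L := by
  induction L with
  | nil => rfl
  | cons x L ih =>
    rw [FreeGroup.reduce.cons, ih h.tail]
    cases L with
    | nil => rfl
    | cons y t =>
      have hxy := (List.isChain_cons_cons.mp h).1
      show (if x.1 = y.1 ∧ x.2 = !y.2 then t else x :: y :: t) = x :: y :: t
      rw [if_neg hxy]

theorem reduced_reduce (L : List (α × Bool)) : Reduced (FreeGroup.reduce L) := by
  induction L with
  | nil => exact List.isChain_nil
  | cons x L ih =>
    rw [FreeGroup.reduce.cons]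
    cases h : FreeGroup.reduce L with
    | nil => exact List.isChain_singleton x
    | cons y t =>
      rw [h] at ih
      by_cases hc : x.1 = y.1 ∧ x.2 = !y.2
      · show Reduced (if x.1 = y.1 ∧ x.2 = !y.2 then t else x :: y :: t)
        rw [if_pos hc]; exact ih.tail
      · show Reduced (if x.1 = y.1 ∧ x.2 = !y.2 then t else x :: y :: t)
        rw [if_neg hc]; exact List.isChain_cons_cons.mpr ⟨hc, ih⟩

theorem reduced_toWord (x : FreeGroup α) : Reduced x.toWord := by
  rw [← FreeGroup.reduce_toWord]; exact reduced_reduce _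

theorem invRev_append (u v : List (α × Bool)) :
    FreeGroup.invRev (u ++ v) = FreeGroup.invRev v ++ FreeGroup.invRev u := by
  simp [FreeGroup.invRev]

theorem invRev_cons (x : α × Bool) (c : List (α × Bool)) :
    FreeGroup.invRev (x :: c) = FreeGroup.invRev c ++ [(x.1, !x.2)] := by
  simp [FreeGroup.invRev]

theorem invRev_flatten_replicate (k : ℕ) (b : List (α × Bool)) :
    FreeGroup.invRev ((List.replicate k b).flatten)
      = (List.replicate k (FreeGroup.invRev b)).flatten := by
  induction k with
  | zero => simp [FreeGroup.invRev]
  | succ j ih =>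
    rw [List.replicate_succ, List.flatten_cons, invRev_append, ih,
      List.replicate_succ' (n := j), List.flatten_append, List.flatten_cons,
      List.flatten_nil, List.append_nil]

theorem decomp : ∀ (N : ℕ) (L : List (α × Bool)), L.length ≤ N → Reduced L → L ≠ [] →
    ∃ c b : List (α × Bool), b ≠ [] ∧ Reduced (b ++ b) ∧ L = c ++ b ++ FreeGroup.invRev c := by
  intro N
  induction N with
  | zero =>
    intro L hlen _ hne
    exact absurd (List.length_eq_zero_iff.mp (Nat.le_zero.mp hlen)) hne
  | succ N ih =>
    intro L hlen hred hne
    obtain ⟨x, T, rfl⟩ := List.exists_cons_of_ne_nil hne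
    by_cases hc : ((x :: T).getLast (by simp)).1 = x.1 ∧ ((x :: T).getLast (by simp)).2 = !x.2
    · -- cancellation between last and head: peel
      have hT : T ≠ [] := by
        rintro rfl
        simp [List.getLast] at hc
      have hylast : (x :: T).getLast (by simp) = T.getLast hT := List.getLast_cons hT
      set y := T.getLast hT with hy
      have hTd : T.dropLast ++ [y] = T := List.dropLast_append_getLast hT
      set M := T.dropLast with hMdef
      have hyx : y = (x.1, !x.2) := by
        rw [hylast] at hc
        exact Prod.ext hc.1 hc.2
      have hM : M ≠ [] := by
        rintro hM0
        have hT2 : T = [y] := by rw [← hTd, hM0]; rfl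
        have := (List.isChain_cons_cons.mp (show Reduced (x :: [y]) by rw [← hT2]; exact hred)).1
        exact this ⟨by rw [hyx], by rw [hyx]; simp⟩
      have hredM : Reduced M := by
        have h1 : Reduced (M ++ [y]) := by rw [hTd]; exact hred.tail
        exact (List.isChain_append.mp h1).1
      have hlenM : M.length ≤ N := by
        have : T.length ≤ N := by simpa using hlen
        have : M.length < T.length := by
          rw [← hTd]; simp
        omega
      obtain ⟨c', b, hb, hbb, hMeq⟩ := ih M hlenM hredM hM
      refine ⟨x :: c', b, hb, hbb, ?_⟩
      rw [invRev_cons]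
      have : T = M ++ [y] := hTd.symm
      rw [this, hMeq, hyx]
      simp [List.append_assoc]
    · -- cyclically reduced
      push_neg at hc
      refine ⟨[], x :: T, by simp, ?_, by simp [FreeGroup.invRev]⟩
      refine List.isChain_append.mpr ⟨hred, hred, ?_⟩
      intro u hu v hv
      have hu' : u = (x :: T).getLast (by simp) := by
        rw [List.getLast?_eq_getLast (by simp)] at hu
        exact (Option.some_injective _ hu).symm
      have hv' : v = x := by simp at hv; exact hv.symm
      subst hu' hv'
      rintro ⟨h1, h2⟩
      exact hc h1 h2

theorem reduced_flatten_replicate {b : List (α × Bool)} (hb : b ≠ [])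
    (hbb : Reduced (b ++ b)) (k : ℕ) : Reduced ((List.replicate k b).flatten) := by
  induction k with
  | zero => exact List.isChain_nil
  | succ j ih =>
    rw [List.replicate_succ, List.flatten_cons]
    obtain ⟨h1, h2, h3⟩ := List.isChain_append.mp hbb
    refine List.isChain_append.mpr ⟨h1, ih, ?_⟩
    intro u hu v hv
    cases j with
    | zero => simp at hv
    | succ i =>
      rw [List.replicate_succ, List.flatten_cons,
        List.head?_append_of_ne_nil _ hb] at hv
      exact h3 u hu v hv

theorem head?_flatten_replicate {b : List (α × Bool)} (hb : b ≠ []) {k : ℕ} (hk : 1 ≤ k) :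
    ((List.replicate k b).flatten).head? = b.head? := by
  obtain ⟨j, rfl⟩ : ∃ j, k = j + 1 := ⟨k - 1, by omega⟩
  rw [List.replicate_succ, List.flatten_cons, List.head?_append_of_ne_nil _ hb]

theorem getLast?_flatten_replicate {b : List (α × Bool)} (hb : b ≠ []) {k : ℕ} (hk : 1 ≤ k) :
    ((List.replicate k b).flatten).getLast? = b.getLast? := by
  obtain ⟨j, rfl⟩ : ∃ j, k = j + 1 := ⟨k - 1, by omega⟩
  rw [List.replicate_succ', List.flatten_append, List.flatten_cons, List.flatten_nil,
    List.append_nil, List.getLast?_append_of_ne_nil _ hb]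

theorem flatten_replicate_ne_nil {b : List (α × Bool)} (hb : b ≠ []) {k : ℕ} (hk : 1 ≤ k) :
    (List.replicate k b).flatten ≠ [] := by
  obtain ⟨j, rfl⟩ : ∃ j, k = j + 1 := ⟨k - 1, by omega⟩
  rw [List.replicate_succ, List.flatten_cons]
  simp [hb]

theorem reduced_conj {c b : List (α × Bool)} (hb : b ≠ []) (hbb : Reduced (b ++ b))
    (hL : Reduced (c ++ b ++ FreeGroup.invRev c)) {k : ℕ} (hk : 1 ≤ k) :
    Reduced (c ++ (List.replicate k b).flatten ++ FreeGroup.invRev c) := by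
  rw [List.append_assoc] at hL ⊢
  obtain ⟨h1, h2, h3⟩ := List.isChain_append.mp hL
  obtain ⟨h2a, h2b, h2c⟩ := List.isChain_append.mp h2
  have hBk := flatten_replicate_ne_nil hb hk
  refine List.isChain_append.mpr ⟨h1,
    List.isChain_append.mpr ⟨reduced_flatten_replicate hb hbb k, h2b, ?_⟩, ?_⟩
  · intro u hu v hv
    exact h2c u (by rwa [getLast?_flatten_replicate hb hk] at hu) v hv
  · intro u hu v hv
    rw [List.head?_append_of_ne_nil _ hBk, head?_flatten_replicate hb hk] at hv
    exact h3 u hu v (by rw [List.head?_append_of_ne_nil _ hb]; exact hv)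

theorem toWord_zpow (a : FreeGroup α) (ha : a ≠ 1) :
    ∃ c b : List (α × Bool), b ≠ [] ∧
      ∀ m : ℤ, 1 ≤ m.natAbs →
        (a ^ m).toWord = c ++ (List.replicate m.natAbs
            (if 0 ≤ m then b else FreeGroup.invRev b)).flatten ++ FreeGroup.invRev c := by
  have hne : a.toWord ≠ [] := fun h => ha (FreeGroup.toWord_eq_nil_iff.mp h)
  obtain ⟨c, b, hb, hbb, hEq⟩ :=
    decomp a.toWord.length a.toWord le_rfl (reduced_toWord a) hne
  have hL : Reduced (c ++ b ++ FreeGroup.invRev c) := hEq ▸ reduced_toWord a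
  have hmk : a = FreeGroup.mk (c ++ b ++ FreeGroup.invRev c) := by
    conv_lhs => rw [← FreeGroup.mk_toWord (x := a), hEq]
  have hpos : ∀ k : ℕ, 1 ≤ k →
      (a ^ k).toWord = c ++ (List.replicate k b).flatten ++ FreeGroup.invRev c := by
    intro k hk
    have h1 : a ^ k = FreeGroup.mk (c ++ (List.replicate k b).flatten ++ FreeGroup.invRev c) := by
      rw [hmk]
      have : FreeGroup.mk (c ++ b ++ FreeGroup.invRev c)
          = FreeGroup.mk c * FreeGroup.mk b * (FreeGroup.mk c)⁻¹ := by
        rw [FreeGroup.inv_mk, FreeGroup.mul_mk, FreeGroup.mul_mk]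
      rw [this, conj_pow, FreeGroup.pow_mk, FreeGroup.inv_mk, FreeGroup.mul_mk,
        FreeGroup.mul_mk]
    rw [h1, FreeGroup.toWord_mk, reduce_eq_self (reduced_conj hb hbb hL hk)]
  refine ⟨c, b, hb, fun m hm => ?_⟩
  by_cases hm0 : 0 ≤ m
  · rw [if_pos hm0]
    have : a ^ m = a ^ m.natAbs := by
      rw [← zpow_natCast]
      congr 1
      omega
    rw [this, hpos m.natAbs hm]
  · rw [if_neg hm0]
    have : a ^ m = (a ^ m.natAbs)⁻¹ := by
      rw [← zpow_natCast, ← zpow_neg]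
      congr 1
      omega
    rw [this, FreeGroup.toWord_inv, hpos m.natAbs hm, invRev_append, invRev_append,
      FreeGroup.invRev_invRev, invRev_flatten_replicate, List.append_assoc]

end NegligibleAux

/-- Every cyclic subgroup of a nonabelian free group of finite rank is negligible. -/
theorem negligible_cyclic (n : ℕ) (hn : 2 ≤ n) (a : FreeGroup (Fin n)) :
    Negligible (Subgroup.zpowers a : Set (FreeGroup (Fin n))) := by
  by_cases ha : a = 1
  · refine ⟨1, fun ε hε => ⟨{1}, fun w hw hws => absurd ?_ hws⟩⟩
    obtain ⟨m, rfl⟩ := Subgroup.mem_zpowers_iff.mp hw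
    simp [ha]
  · obtain ⟨c, b, hb, hpow⟩ := NegligibleAux.toWord_zpow a ha
    have hb1 : 1 ≤ b.length := List.length_pos_iff.mpr hb
    refine ⟨1, fun ε hε => ?_⟩
    set C : ℕ := 2 * c.length + b.length with hC
    set K : ℕ := ⌈(C : ℝ) / ε⌉₊ + 2 with hK
    refine ⟨(Finset.Icc (-(K : ℤ)) (K : ℤ)).image (a ^ ·), fun w hw hws => ?_⟩
    obtain ⟨m, rfl⟩ := Subgroup.mem_zpowers_iff.mp hw
    have hm : (K : ℤ) < |m| := by
      by_contra h
      push_neg at h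
      exact hws (Finset.mem_image.mpr ⟨m, Finset.mem_Icc.mpr (abs_le.mp h), rfl⟩)
    set k : ℕ := m.natAbs with hkdef
    have hkK : K < k := by
      rw [Int.abs_eq_natAbs] at hm
      exact_mod_cast hm
    have hk2 : 2 ≤ k := by omega
    set B : List (Fin n × Bool) := if 0 ≤ m then b else FreeGroup.invRev b with hBdef
    have hBlen : B.length = b.length := by
      rw [hBdef]; split <;> simp [FreeGroup.invRev]
    have hword : (a ^ m).toWord
        = c ++ (List.replicate k B).flatten ++ FreeGroup.invRev c := hpow m (by omega)
    set jh : ℕ := k / 2 with hjh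
    have hjh1 : 1 ≤ jh := by omega
    set u : List (Fin n × Bool) := (List.replicate jh B).flatten with hu
    have hulen : u.length = jh * b.length := by
      simp [hu, hBlen]
    have hune : u ≠ [] := by
      have hlu : u.length ≠ 0 := by
        rw [hulen]
        exact Nat.mul_ne_zero (by omega) (by omega)
      intro h0
      rw [h0] at hlu
      simp at hlu
    have hLen : (a ^ m).toWord.length = 2 * c.length + k * b.length := by
      rw [hword]
      simp [FreeGroup.invRev, hBlen]
      ring
    have hrepl : List.replicate k B
        = List.replicate jh B ++ List.replicate jh B ++ List.replicate (k - 2 * jh) B := by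
      rw [← List.replicate_add, ← List.replicate_add]
      congr 1
      omega
    have hsplit : (a ^ m).toWord
        = c ++ (u ++ (u ++ ((List.replicate (k - 2 * jh) B).flatten ++ FreeGroup.invRev c))) := by
      rw [hword, hrepl, List.flatten_append, List.flatten_append, ← hu]
      simp [List.append_assoc]
    have hsplit2 : (a ^ m).toWord
        = (c ++ u) ++ (u ++ ((List.replicate (k - 2 * jh) B).flatten ++ FreeGroup.invRev c)) := by
      rw [hsplit, List.append_assoc]
    have hmul : jh * b.length < k * b.length :=
      Nat.mul_lt_mul_of_lt_of_le (by omega) le_rfl (by omega)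
    have hproper : u.length < (a ^ m).toWord.length := by
      rw [hLen, hulen]; omega
    refine ⟨fun _ => ((c.length, u), (c.length + u.length, u)), ?_, ?_, ?_, ?_⟩
    · intro i
      constructor
      · refine ⟨⟨hune, ?_⟩, hproper⟩
        rw [hsplit]
        simp only []
        rw [List.drop_left, List.take_left]
      · refine ⟨⟨hune, ?_⟩, hproper⟩
        rw [hsplit2]
        simp only []
        have hcl : (c ++ u).length = c.length + u.length := by simp
        rw [← hcl, List.drop_left, List.take_left]
    · intro i
      left
      rfl
    · intro i
      simp only [ne_eq, Prod.mk.injEq, not_and]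
      intro h
      exfalso
      have : u.length ≠ 0 := by simpa using hune
      omega
    · have hsubset : {j : ℕ | j < (a ^ m).toWord.length ∧
          ∀ i : Fin 1, ¬CoversPos ((fun _ => ((c.length, u), (c.length + u.length, u))) i).1 j ∧
            ¬CoversPos ((fun _ => ((c.length, u), (c.length + u.length, u))) i).2 j}
          ⊆ ↑(Finset.range c.length
              ∪ Finset.Ico (c.length + 2 * u.length) (a ^ m).toWord.length) := by
        intro t ht
        obtain ⟨htL, hcov⟩ := ht
        obtain ⟨h1, h2⟩ := hcov 0
        simp only [CoversPos, not_and, not_lt] at h1 h2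
        simp only [Finset.coe_union, Set.mem_union, Finset.coe_range, Set.mem_Iio,
          Finset.coe_Ico, Set.mem_Ico]
        by_cases hct : t < c.length
        · left; exact hct
        · right
          push_neg at hct
          have h1' := h1 hct
          have h2' := h2 (by omega)
          exact ⟨by omega, htL⟩
      have hcard : ({j : ℕ | j < (a ^ m).toWord.length ∧
          ∀ i : Fin 1, ¬CoversPos ((fun _ => ((c.length, u), (c.length + u.length, u))) i).1 j ∧
            ¬CoversPos ((fun _ => ((c.length, u), (c.length + u.length, u))) i).2 j}).ncard
          ≤ C := by
        have hc1 : {j : ℕ | j < (a ^ m).toWord.length ∧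
            ∀ i : Fin 1, ¬CoversPos ((fun _ => ((c.length, u), (c.length + u.length, u))) i).1 j ∧
              ¬CoversPos ((fun _ => ((c.length, u), (c.length + u.length, u))) i).2 j}.ncard
            ≤ (Finset.range c.length
              ∪ Finset.Ico (c.length + 2 * u.length) (a ^ m).toWord.length).card := by
          rw [← Set.ncard_coe_finset]
          exact Set.ncard_le_ncard hsubset (Finset.finite_toSet _)
        refine le_trans hc1 ?_
        refine le_trans (Finset.card_union_le _ _) ?_
        rw [Finset.card_range, Nat.card_Ico]
        have e1 : 2 * (jh * b.length) ≤ k * b.length := by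
          calc 2 * (jh * b.length) = (2 * jh) * b.length := by ring
          _ ≤ k * b.length := Nat.mul_le_mul_right _ (by omega)
        have e2 : k * b.length - 2 * (jh * b.length) ≤ b.length := by
          have h2j : k * b.length - 2 * (jh * b.length) = (k - 2 * jh) * b.length := by
            rw [Nat.sub_mul]; ring_nf
          rw [h2j]
          calc (k - 2 * jh) * b.length ≤ 1 * b.length :=
            Nat.mul_le_mul_right _ (by omega)
          _ = b.length := one_mul _
        rw [hLen, hulen, hC]
        omega
      have hkC : (C : ℝ) ≤ ε * k := by
        have h1 : (C : ℝ) / ε ≤ (⌈(C : ℝ) / ε⌉₊ : ℝ) := Nat.le_ceil _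
        have h2 : ((⌈(C : ℝ) / ε⌉₊ : ℕ) : ℝ) ≤ (k : ℝ) := by
          exact_mod_cast Nat.le_of_lt (by omega)
        have := (div_le_iff₀ hε).mp (le_trans h1 h2)
        linarith [this]
      have hkL : (k : ℝ) ≤ ((a ^ m).toWord.length : ℝ) := by
        have : k ≤ (a ^ m).toWord.length := by
          rw [hLen]
          calc k = k * 1 := (mul_one k).symm
          _ ≤ k * b.length := Nat.mul_le_mul_left _ hb1
          _ ≤ 2 * c.length + k * b.length := by omega
        exact_mod_cast this
      calc (({j : ℕ | j < (a ^ m).toWord.length ∧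
          ∀ i : Fin 1, ¬CoversPos ((fun _ => ((c.length, u), (c.length + u.length, u))) i).1 j ∧
            ¬CoversPos ((fun _ => ((c.length, u), (c.length + u.length, u))) i).2 j}).ncard : ℝ)
          ≤ (C : ℝ) := by exact_mod_cast hcard
      _ ≤ ε * k := hkC
      _ ≤ ε * (a ^ m).toWord.length := by
          exact mul_le_mul_of_nonneg_left hkL hε.le
end

section
/- Let F_ω be the free group on a countably infinite sequence of free generators e_1, e_2, e_3, …, and let X be a definable subset of F_ω which is generic. Then e_n ∈ X for all but finitely many n. -/
open FirstOrder

def mulEquivLangEquiv {G H : Type*} [Group G] [Group H] (σ : G ≃* H) :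
    Language.Equiv groupLang G H where
  toEquiv := σ.toEquiv
  map_fun' := by
    intro n f x
    match n, f with
    | 0, _ => exact map_one σ
    | 1, _ => exact map_inv σ _
    | 2, _ => exact map_mul σ _ _
  map_rel' := by intro n r; exact r.elim

lemma support_bound (x : FreeGroup ℕ) :
    ∃ M : ℕ, ∀ f : FreeGroup ℕ →* FreeGroup ℕ,
      (∀ j < M, f (FreeGroup.of j) = FreeGroup.of j) → f x = x := by
  induction x with
  | C1 => exact ⟨0, fun f _ => map_one f⟩
  | of j => exact ⟨j + 1, fun f h => h j (Nat.lt_succ_self j)⟩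
  | inv_of j ih =>
    obtain ⟨M, hM⟩ := ih
    exact ⟨M, fun f h => by rw [map_inv, hM f h]⟩
  | mul x y ihx ihy =>
    obtain ⟨M, hM⟩ := ihx
    obtain ⟨N, hN⟩ := ihy
    refine ⟨max M N, fun f h => ?_⟩
    rw [map_mul, hM f fun j hj => h j (lt_of_lt_of_le hj (le_max_left _ _)),
      hN f fun j hj => h j (lt_of_lt_of_le hj (le_max_right _ _))]

lemma finset_support_bound (s : Finset (FreeGroup ℕ)) :
    ∃ M : ℕ, ∀ x ∈ s, ∀ f : FreeGroup ℕ →* FreeGroup ℕ,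
      (∀ j < M, f (FreeGroup.of j) = FreeGroup.of j) → f x = x := by
  choose b hb using support_bound
  refine ⟨s.sup b, fun x hx f h => hb x f fun j hj => h j (lt_of_lt_of_le hj ?_)⟩
  exact Finset.le_sup hx


/-- If `X` is a generic definable subset of the free group on countably many generators
`e_1, e_2, …`, then `e_n ∈ X` for all but finitely many `n`. -/
theorem generic_contains_cofinitely_many_generators (X : Set (FreeGroup ℕ))
    (hdef : IsDefinable X) (hgen : Generic X) :
    {n : ℕ | FreeGroup.of n ∉ X}.Finite := by
  classical
  obtain ⟨s, hs⟩ := hgen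
  obtain ⟨A0, -, hA0⟩ := Set.definable_iff_finitely_definable.mp hdef
  obtain ⟨φ, hφ⟩ := Set.definable_iff_exists_formula_sum.mp hA0
  have hmem : ∀ a : FreeGroup ℕ,
      a ∈ X ↔ φ.Realize (Sum.elim Subtype.val (fun _ : Fin 1 => a)) := by
    intro a
    have := Set.ext_iff.mp hφ (fun _ : Fin 1 => a)
    simpa using this
  -- invariance of X under automorphisms fixing A0 pointwise
  have key : ∀ σ : FreeGroup ℕ ≃* FreeGroup ℕ, (∀ b ∈ A0, σ b = b) →
      ∀ a : FreeGroup ℕ, (σ a ∈ X ↔ a ∈ X) := by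
    intro σ hσ a
    rw [hmem, hmem]
    have hcomp : ⇑(mulEquivLangEquiv σ) ∘ (Sum.elim Subtype.val (fun _ : Fin 1 => a) :
          ((A0 : Set (FreeGroup ℕ)) ⊕ Fin 1 → FreeGroup ℕ))
        = Sum.elim Subtype.val (fun _ : Fin 1 => σ a) := by
      funext x
      cases x with
      | inl b => exact hσ b.1 b.2
      | inr i => rfl
    rw [← hcomp, Language.StrongHomClass.realize_formula (mulEquivLangEquiv σ)]
  obtain ⟨M, hM⟩ := finset_support_bound (A0 ∪ s)
  refine Set.Finite.subset (Set.finite_Iio M) ?_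
  intro n hn
  by_contra hnM
  simp only [Set.mem_Iio, not_lt] at hnM
  apply hn
  obtain ⟨g, hgs, hgX⟩ := hs (FreeGroup.of n)
  set fn : ℕ → FreeGroup ℕ := fun j => if j = n then g⁻¹ * FreeGroup.of n else FreeGroup.of j
    with hfn
  set fi : ℕ → FreeGroup ℕ := fun j => if j = n then g * FreeGroup.of n else FreeGroup.of j
    with hfi
  have hfix : ∀ j < M, (FreeGroup.lift fn) (FreeGroup.of j) = FreeGroup.of j := by
    intro j hj
    have : j ≠ n := fun h => absurd hnM (by omega)
    simp [hfn, FreeGroup.lift_apply_of, this]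
  have hfix' : ∀ j < M, (FreeGroup.lift fi) (FreeGroup.of j) = FreeGroup.of j := by
    intro j hj
    have : j ≠ n := fun h => absurd hnM (by omega)
    simp [hfi, FreeGroup.lift_apply_of, this]
  have hg1 : (FreeGroup.lift fi) g = g :=
    hM g (Finset.mem_union_right _ hgs) _ hfix'
  have hg2 : (FreeGroup.lift fn) g = g :=
    hM g (Finset.mem_union_right _ hgs) _ hfix
  have comp1 : (FreeGroup.lift fi).comp (FreeGroup.lift fn) = MonoidHom.id _ := by
    apply FreeGroup.ext_hom
    intro j
    by_cases hj : j = n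
    · subst hj
      have e1 : fn j = g⁻¹ * FreeGroup.of j := if_pos rfl
      have e2 : fi j = g * FreeGroup.of j := if_pos rfl
      simp only [MonoidHom.comp_apply, MonoidHom.id_apply, FreeGroup.lift_apply_of]
      rw [e1, map_mul, map_inv, hg1, FreeGroup.lift_apply_of, e2]
      group
    · simp [hfn, hfi, FreeGroup.lift_apply_of, hj]
  have comp2 : (FreeGroup.lift fn).comp (FreeGroup.lift fi) = MonoidHom.id _ := by
    apply FreeGroup.ext_hom
    intro j
    by_cases hj : j = n
    · subst hj
      have e1 : fn j = g⁻¹ * FreeGroup.of j := if_pos rfl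
      have e2 : fi j = g * FreeGroup.of j := if_pos rfl
      simp only [MonoidHom.comp_apply, MonoidHom.id_apply, FreeGroup.lift_apply_of]
      rw [e2, map_mul, hg2, FreeGroup.lift_apply_of, e1]
      group
    · simp [hfn, hfi, FreeGroup.lift_apply_of, hj]
  set σ : FreeGroup ℕ ≃* FreeGroup ℕ :=
    MonoidHom.toMulEquiv (FreeGroup.lift fn) (FreeGroup.lift fi) comp1 comp2 with hσdef
  have hσA0 : ∀ b ∈ A0, σ b = b := fun b hb =>
    hM b (Finset.mem_union_left _ hb) _ hfix
  have := (key σ hσA0 (FreeGroup.of n))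
  rw [← this]
  show (FreeGroup.lift fn) (FreeGroup.of n) ∈ X
  rw [FreeGroup.lift_apply_of]
  simpa [hfn] using hgX
end

section
/- Let F_ω be the free group on a countably infinite sequence of free generators e_1, e_2, e_3, …. Then there do not exist two disjoint definable generic subsets of F_ω. -/
open FirstOrder

/-- A group automorphism is an automorphism of the `groupLang` structure. -/
def mulEquivToLEquiv {G : Type*} [Group G] (σ : G ≃* G) : G ≃[groupLang] G where
  toEquiv := σ.toEquiv
  map_fun' := by
    intro n f x
    match n, f with
    | 0, _ => exact map_one σ
    | 1, _ => exact map_inv σ _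
    | 2, _ => exact map_mul σ _ _
  map_rel' := by intro n r; exact r.elim

lemma definable_invariant {G : Type*} [Group G] {X : Set G} (hX : IsDefinable X) :
    ∃ T : Finset G, ∀ σ : G ≃* G, (∀ t ∈ T, σ t = t) → ∀ x, x ∈ X ↔ σ x ∈ X := by
  obtain ⟨A0, -, hA0⟩ := Set.definable_iff_finitely_definable.mp hX
  obtain ⟨φ, hφ⟩ := Set.definable_iff_exists_formula_sum.mp hA0
  have hx : ∀ y : G, y ∈ X ↔
      φ.Realize (Sum.elim (fun a : (A0 : Set G) => (a : G)) (fun _ : Fin 1 => y)) := by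
    intro y
    have := Set.ext_iff.mp hφ (fun _ : Fin 1 => y)
    simpa using this
  refine ⟨A0, fun σ hσ x => ?_⟩
  rw [hx, hx (σ x)]
  have key := FirstOrder.Language.StrongHomClass.realize_formula (mulEquivToLEquiv σ)
    (v := Sum.elim (fun a : (A0 : Set G) => (a : G)) (fun _ : Fin 1 => x)) φ
  rw [← key]
  have : (mulEquivToLEquiv σ) ∘ Sum.elim (fun a : (A0 : Set G) => (a : G)) (fun _ : Fin 1 => x)
      = Sum.elim (fun a : (A0 : Set G) => (a : G)) (fun _ : Fin 1 => σ x) := by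
    funext a
    rcases a with a | a
    · exact hσ a.1 (by simpa using a.2)
    · rfl
  rw [this]

/-- Every element of the free group lies in the subgroup generated by an initial
segment of the generators. -/
lemma exists_bound (g : FreeGroup ℕ) :
    ∃ n : ℕ, g ∈ Subgroup.closure (FreeGroup.of '' Set.Iio n) := by
  induction g with
  | C1 => exact ⟨0, Subgroup.one_mem _⟩
  | of i => exact ⟨i + 1, Subgroup.subset_closure ⟨i, by simp, rfl⟩⟩
  | inv_of i h => obtain ⟨n, hn⟩ := h; exact ⟨n, Subgroup.inv_mem _ hn⟩
  | mul a b ha hb =>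
    obtain ⟨n, hn⟩ := ha; obtain ⟨n', hn'⟩ := hb
    refine ⟨max n n', Subgroup.mul_mem _ ?_ ?_⟩
    · exact Subgroup.closure_mono (Set.image_mono (Set.Iio_subset_Iio (le_max_left _ _))) hn
    · exact Subgroup.closure_mono (Set.image_mono (Set.Iio_subset_Iio (le_max_right _ _))) hn'

/-- The endomorphism of the free group sending `of m` to `v * of m` and fixing the
other generators. -/
def shiftHom (v : FreeGroup ℕ) (m : ℕ) : FreeGroup ℕ →* FreeGroup ℕ :=
  FreeGroup.lift fun i => if i = m then v * FreeGroup.of m else FreeGroup.of i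

lemma shiftHom_fix {v : FreeGroup ℕ} {m : ℕ} {w : FreeGroup ℕ}
    (hw : w ∈ Subgroup.closure (FreeGroup.of '' Set.Iio m)) : shiftHom v m w = w := by
  induction hw using Subgroup.closure_induction with
  | mem x hx =>
    obtain ⟨i, hi, rfl⟩ := hx
    simp [shiftHom, (Set.mem_Iio.mp hi).ne]
  | one => simp
  | mul a b _ _ ha hb => simp [map_mul, ha, hb]
  | inv a _ ha => simp [map_inv, ha]

/-- The automorphism of the free group sending `of m` to `v * of m` and fixing the
other generators, where `v` does not involve `of m`. -/
def shiftAut (v : FreeGroup ℕ) (m : ℕ) (hv : v ∈ Subgroup.closure (FreeGroup.of '' Set.Iio m)) :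
    FreeGroup ℕ ≃* FreeGroup ℕ :=
  MonoidHom.toMulEquiv (shiftHom v m) (shiftHom v⁻¹ m)
    (by
      apply FreeGroup.ext_hom
      intro i
      by_cases h : i = m
      · subst h
        have h1 : shiftHom v i (FreeGroup.of i) = v * FreeGroup.of i := by simp [shiftHom]
        have h2 : shiftHom v⁻¹ i (FreeGroup.of i) = v⁻¹ * FreeGroup.of i := by simp [shiftHom]
        rw [MonoidHom.comp_apply, h1, map_mul, shiftHom_fix hv, h2, MonoidHom.id_apply,
          ← mul_assoc, mul_inv_cancel, one_mul]
      · have : shiftHom v m (FreeGroup.of i) = FreeGroup.of i := by simp [shiftHom, h]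
        have h2 : shiftHom v⁻¹ m (FreeGroup.of i) = FreeGroup.of i := by simp [shiftHom, h]
        rw [MonoidHom.comp_apply, this, h2, MonoidHom.id_apply])
    (by
      apply FreeGroup.ext_hom
      intro i
      by_cases h : i = m
      · subst h
        have h1 : shiftHom v i (FreeGroup.of i) = v * FreeGroup.of i := by simp [shiftHom]
        have h2 : shiftHom v⁻¹ i (FreeGroup.of i) = v⁻¹ * FreeGroup.of i := by simp [shiftHom]
        rw [MonoidHom.comp_apply, h2, map_mul, shiftHom_fix (Subgroup.inv_mem _ hv), h1,
          MonoidHom.id_apply, ← mul_assoc, inv_mul_cancel, one_mul]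
      · have : shiftHom v m (FreeGroup.of i) = FreeGroup.of i := by simp [shiftHom, h]
        have h2 : shiftHom v⁻¹ m (FreeGroup.of i) = FreeGroup.of i := by simp [shiftHom, h]
        rw [MonoidHom.comp_apply, h2, this, MonoidHom.id_apply])

lemma shiftAut_apply (v : FreeGroup ℕ) (m : ℕ)
    (hv : v ∈ Subgroup.closure (FreeGroup.of '' Set.Iio m)) (x : FreeGroup ℕ) :
    shiftAut v m hv x = shiftHom v m x := rfl

/-- There do not exist two disjoint definable generic subsets of the free group on
countably many generators. -/
theorem no_disjoint_generics (X Y : Set (FreeGroup ℕ))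
    (hX : IsDefinable X) (hY : IsDefinable Y) (hXg : Generic X) (hYg : Generic Y) :
    ¬ Disjoint X Y := by
  intro hdis
  obtain ⟨TX, hTX⟩ := definable_invariant hX
  obtain ⟨TY, hTY⟩ := definable_invariant hY
  obtain ⟨sX, hsX⟩ := hXg
  obtain ⟨sY, hsY⟩ := hYg
  classical
  set T : Finset (FreeGroup ℕ) := TX ∪ TY ∪ sX ∪ sY with hTdef
  choose n hn using exists_bound
  set m : ℕ := T.sup n with hmdef
  have hT : ∀ t ∈ T, t ∈ Subgroup.closure (FreeGroup.of '' Set.Iio m) := fun t ht =>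
    Subgroup.closure_mono (Set.image_mono (Set.Iio_subset_Iio (Finset.le_sup ht))) (hn t)
  obtain ⟨g, hg, hgX⟩ := hsX (FreeGroup.of m)
  obtain ⟨h, hh, hhY⟩ := hsY (FreeGroup.of m)
  have hgH : g ∈ Subgroup.closure (FreeGroup.of '' Set.Iio m) :=
    hT g (by simp [hTdef, hg])
  have hhH : h ∈ Subgroup.closure (FreeGroup.of '' Set.Iio m) :=
    hT h (by simp [hTdef, hh])
  have hofm : ∀ v (hv : v ∈ Subgroup.closure (FreeGroup.of '' Set.Iio m)),
      shiftAut v m hv (v⁻¹ * FreeGroup.of m) = FreeGroup.of m := by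
    intro v hv
    rw [shiftAut_apply, map_mul, map_inv, shiftHom_fix hv]
    have : shiftHom v m (FreeGroup.of m) = v * FreeGroup.of m := by simp [shiftHom]
    rw [this, ← mul_assoc, inv_mul_cancel, one_mul]
  have hxm : FreeGroup.of m ∈ X := by
    have hfix : ∀ t ∈ TX, shiftAut g m hgH t = t := fun t ht => by
      rw [shiftAut_apply]; exact shiftHom_fix (hT t (by simp [hTdef, ht]))
    have := (hTX (shiftAut g m hgH) hfix (g⁻¹ * FreeGroup.of m)).mp hgX
    rwa [hofm g hgH] at this
  have hym : FreeGroup.of m ∈ Y := by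
    have hfix : ∀ t ∈ TY, shiftAut h m hhH t = t := fun t ht => by
      rw [shiftAut_apply]; exact shiftHom_fix (hT t (by simp [hTdef, ht]))
    have := (hTY (shiftAut h m hhH) hfix (h⁻¹ * FreeGroup.of m)).mp hhY
    rwa [hofm h hhH] at this
  exact Set.disjoint_left.mp hdis hxm hym
end

section
/- Let F be a nonabelian free group of finite rank and let m ≥ 2 be an integer. Then the set {g^m : g ∈ F} of m-th powers in F is a negligible subset of F. -/
open FirstOrder

namespace NegAux

open FreeGroup List

variable {α : Type*} [DecidableEq α]

/-- The no-cancellation relation on adjacent letters. -/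
def Rel (a b : α × Bool) : Prop := ¬(b.1 = a.1 ∧ b.2 = !a.2)

def Reduced (L : List (α × Bool)) : Prop := L.Chain' Rel

/-- cyclically reduced condition -/
def Cyc (c : List (α × Bool)) : Prop := ∀ a ∈ c.getLast?, ∀ b ∈ c.head?, Rel a b

lemma chain'_reduce (L : List (α × Bool)) : Reduced (reduce L) := by
  induction L with
  | nil => exact List.isChain_nil
  | cons x L ih =>
    rw [Reduced, reduce.cons]
    rcases h : reduce L with _ | ⟨hd, tl⟩
    · exact List.isChain_singleton x
    · rw [h] at ih
      by_cases hc : x.1 = hd.1 ∧ x.2 = !hd.2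
      · simp only [hc, if_true]
        exact ih.tail
      · simp only [hc, if_false]
        exact List.isChain_cons_cons.2 ⟨fun h' => hc ⟨h'.1.symm, by
          rcases h' with ⟨h1, h2⟩; cases hx : x.2 <;> cases hh : hd.2 <;>
            simp_all⟩, ih⟩

lemma reduced_no_step {L M : List (α × Bool)} (h : Reduced L) (s : Red.Step L M) : False := by
  cases s with
  | @not L₁ L₂ x b =>
    have hinf : [(x, b), (x, !b)] <:+: L₁ ++ (x, b) :: (x, !b) :: L₂ := ⟨L₁, L₂, by simp⟩
    have := (h.infix hinf)
    rw [List.isChain_cons_cons] at this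
    exact this.1 ⟨rfl, rfl⟩

lemma reduce_eq_self_s10 {L : List (α × Bool)} (h : Reduced L) : reduce L = L := by
  rcases (reduce.red (L := L)).cases_head with h1 | ⟨M, hs, _⟩
  · exact h1.symm
  · exact absurd hs (fun s => reduced_no_step h s)

lemma toWord_mk' {L : List (α × Bool)} (h : Reduced L) : (mk L).toWord = L := by
  rw [toWord_mk, reduce_eq_self_s10 h]

lemma reduced_toWord (x : FreeGroup α) : Reduced x.toWord := by
  have := reduce_toWord x
  rw [← this]; exact chain'_reduce _

lemma invRev_cons (x : α × Bool) (u : List (α × Bool)) :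
    invRev (x :: u) = invRev u ++ [(x.1, !x.2)] := by
  simp [invRev]

/-- Cyclic decomposition of a reduced word. -/
lemma cyclic_decomp : ∀ (n : ℕ) (L : List (α × Bool)), L.length ≤ n → Reduced L →
    ∃ u c, L = u ++ c ++ invRev u ∧ Cyc c ∧ (L ≠ [] → c ≠ [])
  | 0, L, hn, _ => by
    have : L = [] := List.length_eq_zero_iff.mp (Nat.le_zero.mp hn)
    exact ⟨[], [], by simp [this, invRev], fun a ha => by simp at ha, fun h => absurd this h⟩
  | (n+1), L, hn, hred => by
    rcases L with _ | ⟨x, L'⟩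
    · exact ⟨[], [], by simp [invRev], fun a ha => by simp at ha, fun h => absurd rfl h⟩
    rcases eq_or_ne L' [] with rfl | hL'
    · refine ⟨[], [x], by simp [invRev], ?_, fun _ h => by simp at h⟩
      intro a ha b hb
      simp only [List.getLast?_singleton, Option.mem_some_iff] at ha
      simp only [List.head?_cons, Option.mem_some_iff] at hb
      subst ha; subst hb
      rintro ⟨-, h2⟩
      exact Bool.not_ne_self x.2 h2.symm
    · set y := L'.getLast hL' with hy
      have hL'eq : L' = L'.dropLast ++ [y] := (List.dropLast_append_getLast hL').symm
      by_cases hcyc : Rel y x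
      · refine ⟨[], x :: L', by simp [invRev], ?_, fun _ h => by simp at h⟩
        intro a ha b hb
        simp only [List.head?_cons, Option.mem_some_iff] at hb
        have : (x :: L').getLast? = some y := by
          rw [List.getLast?_eq_getLast (l := x :: L') (by simp)]
          simp [List.getLast_cons hL', hy]
        rw [this, Option.mem_some_iff] at ha
        subst ha; subst hb; exact hcyc
      · -- x and y cancel
        have hxy : y = (x.1, !x.2) := by
          simp only [Rel, not_not] at hcyc
          have : x = (y.1, !y.2) := Prod.ext hcyc.1 hcyc.2
          rw [this]; simp
        set M := L'.dropLast with hM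
        have hLM : x :: L' = [x] ++ M ++ [y] := by
          conv_lhs => rw [hL'eq]
          simp [hM]
        have hMred : Reduced M := hred.infix ⟨[x], [y], hLM.symm⟩
        have hMlen : M.length ≤ n := by
          have := hn
          simp only [List.length_cons] at this
          have h2 : L'.length = M.length + 1 := by
            rw [hM, List.length_dropLast]
            have : L'.length ≠ 0 := by simpa using hL'
            omega
          omega
        obtain ⟨u', c, hdec, hcy, hnil⟩ := cyclic_decomp n M hMlen hMred
        refine ⟨x :: u', c, ?_, hcy, ?_⟩
        · rw [hLM, hdec, invRev_cons, ← hxy]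
          simp
        · intro _ hc
          have hMnil : M = [] := by
            by_contra hMn
            exact (hnil hMn) hc
          rw [hMnil] at hdec
          have hu' : u' = [] := by
            rcases List.append_eq_nil_iff.mp (List.append_eq_nil_iff.mp hdec.symm).1 with ⟨h1, _⟩
            exact h1
          rw [hMnil] at hLM
          -- L = [x, y] with y = inverse of x : contradicts reduced
          have : Reduced (x :: L') := hred
          rw [hLM] at this
          simp only [List.nil_append, List.singleton_append, Reduced, List.isChain_cons_cons] at this
          exact (List.isChain_cons_cons.1 this).1 (by rw [hxy]; exact ⟨rfl, rfl⟩)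


/-- concatenated power of a word -/
def repw (c : List (α × Bool)) : ℕ → List (α × Bool)
  | 0 => []
  | k+1 => c ++ repw c k

omit [DecidableEq α] in
lemma repw_length (c : List (α × Bool)) : ∀ k, (repw c k).length = k * c.length
  | 0 => by simp [repw]
  | k+1 => by simp [repw, repw_length c k, Nat.succ_mul, Nat.add_comm]

omit [DecidableEq α] in
lemma repw_succ' (c : List (α × Bool)) : ∀ k, repw c (k+1) = repw c k ++ c
  | 0 => by simp [repw]
  | k+1 => by
    show c ++ repw c (k+1) = repw c (k+1) ++ c
    conv_lhs => rw [repw_succ' c k]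
    rw [← List.append_assoc]
    rfl

omit [DecidableEq α] in
lemma repw_head? (c : List (α × Bool)) (hc : c ≠ []) (k : ℕ) :
    (repw c (k+1)).head? = c.head? := by
  rw [repw, List.head?_append_of_ne_nil _ hc]

omit [DecidableEq α] in
lemma repw_getLast? (c : List (α × Bool)) (hc : c ≠ []) (k : ℕ) :
    (repw c (k+1)).getLast? = c.getLast? := by
  rw [repw_succ', List.getLast?_append_of_ne_nil _ hc]

omit [DecidableEq α] in
lemma repw_ne_nil (c : List (α × Bool)) (hc : c ≠ []) (k : ℕ) :
    repw c (k+1) ≠ [] := by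
  show c ++ repw c k ≠ []
  simp [hc]

omit [DecidableEq α] in
lemma repw_nil : ∀ k, repw ([] : List (α × Bool)) k = []
  | 0 => rfl
  | k+1 => by show [] ++ repw [] k = []; rw [List.nil_append, repw_nil k]

omit [DecidableEq α] in
lemma chain'_repw {c : List (α × Bool)} (hc : List.Chain' Rel c) (hcyc : Cyc c) :
    ∀ k, List.Chain' Rel (repw c k)
  | 0 => List.isChain_nil
  | k+1 => by
    rcases eq_or_ne c [] with rfl | hcn
    · rw [repw_nil]; exact List.isChain_nil
    show List.Chain' Rel (c ++ repw c k)
    refine List.isChain_append.2 ⟨hc, chain'_repw hc hcyc k, ?_⟩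
    intro x hx y hy
    rcases k with _ | k
    · simp [repw] at hy
    · rw [repw_head? c hcn k] at hy
      exact hcyc x hx y hy

/-- the key reducedness lemma -/
lemma reduced_conj_pow {u c : List (α × Bool)} (hc : c ≠ [])
    (h : Reduced (u ++ c ++ invRev u)) (hcyc : Cyc c) (k : ℕ) :
    Reduced (u ++ repw c (k+1) ++ invRev u) := by
  rw [Reduced, List.append_assoc] at h ⊢
  obtain ⟨hu, h2, hj1⟩ := List.isChain_append.1 h
  obtain ⟨hcc, hv, hj2⟩ := List.isChain_append.1 h2
  refine List.isChain_append.2 ⟨hu, ?_, ?_⟩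
  · refine List.isChain_append.2 ⟨chain'_repw hcc hcyc (k+1), hv, ?_⟩
    intro x hx y hy
    rw [repw_getLast? c hc k] at hx
    exact hj2 x hx y hy
  · intro x hx y hy
    rw [List.head?_append_of_ne_nil _ (repw_ne_nil c hc k), repw_head? c hc k] at hy
    refine hj1 x hx y ?_
    rw [List.head?_append_of_ne_nil _ hc]
    exact hy

omit [DecidableEq α] in
lemma mk_repw (c : List (α × Bool)) : ∀ k, FreeGroup.mk (repw c k) = (FreeGroup.mk c) ^ k
  | 0 => by simp [repw]; rfl
  | k+1 => by rw [repw, ← FreeGroup.mul_mk, mk_repw c k, pow_succ']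

lemma toWord_pow (g : FreeGroup α) (hg : g ≠ 1) (k : ℕ) :
    ∃ u c : List (α × Bool), c ≠ [] ∧ g.toWord = u ++ c ++ invRev u ∧
      (g ^ (k+1)).toWord = u ++ repw c (k+1) ++ invRev u := by
  obtain ⟨u, c, hdec, hcyc, hnil⟩ :=
    cyclic_decomp g.toWord.length g.toWord le_rfl (reduced_toWord g)
  have hc : c ≠ [] := hnil (fun h => hg (FreeGroup.toWord_eq_nil_iff.1 h))
  refine ⟨u, c, hc, hdec, ?_⟩
  have hred : Reduced (u ++ c ++ invRev u) := by rw [← hdec]; exact reduced_toWord g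
  have hg' : g = FreeGroup.mk u * FreeGroup.mk c * (FreeGroup.mk u)⁻¹ := by
    rw [FreeGroup.inv_mk, FreeGroup.mul_mk, FreeGroup.mul_mk, ← hdec, FreeGroup.mk_toWord]
  have : g ^ (k+1) = FreeGroup.mk (u ++ repw c (k+1) ++ invRev u) := by
    rw [hg', conj_pow, ← mk_repw, FreeGroup.inv_mk, FreeGroup.mul_mk, FreeGroup.mul_mk]
  rw [this, toWord_mk' (reduced_conj_pow hc hred hcyc k)]

end NegAux

/-- For `m ≥ 2`, the set of `m`-th powers in a nonabelian free group of finite rank is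
negligible. -/




theorem negligible_powers (n : ℕ) (hn : 2 ≤ n) (m : ℕ) (hm : 2 ≤ m) :
    Negligible {x : FreeGroup (Fin n) | ∃ g : FreeGroup (Fin n), x = g ^ m} := by
  classical
  obtain ⟨k, rfl⟩ : ∃ k, m = k + 2 := ⟨m - 2, by omega⟩
  refine ⟨2, fun ε hε => ⟨{1}, ?_⟩⟩
  rintro w ⟨g, rfl⟩ hw
  have hg : g ≠ 1 := by rintro rfl; exact hw (by simp)
  obtain ⟨u, c, hc, hdecg, hdecw⟩ := NegAux.toWord_pow g hg (k + 1)
  have hdecw' : (g ^ (k + 2)).toWord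
      = u ++ NegAux.repw c (k + 2) ++ FreeGroup.invRev u := by
    rw [show k + 2 = k + 1 + 1 by omega]; exact hdecw
  set B := NegAux.repw c (k + 1) with hB
  have hBne : B ≠ [] := NegAux.repw_ne_nil c hc k
  have hBlen : B.length = (k + 1) * c.length := NegAux.repw_length c (k + 1)
  have hlc : 1 ≤ c.length := List.length_pos_iff.2 hc
  have hr1 : (g ^ (k + 2)).toWord = u ++ (B ++ (c ++ FreeGroup.invRev u)) := by
    rw [hdecw', NegAux.repw_succ' c (k + 1)]
    simp [List.append_assoc, hB]
  have hr2 : (g ^ (k + 2)).toWord = (u ++ c) ++ (B ++ FreeGroup.invRev u) := by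
    rw [hdecw']
    show u ++ (c ++ B) ++ FreeGroup.invRev u = _
    simp [List.append_assoc]
  have hr3 : (g ^ (k + 2)).toWord = (u ++ NegAux.repw c (k + 2)) ++ FreeGroup.invRev u :=
    hdecw'
  have hlen : (g ^ (k + 2)).toWord.length
      = u.length + (k + 2) * c.length + u.length := by
    rw [hdecw']
    simp [NegAux.repw_length]
    ring
  have harith : (k + 1) * c.length + c.length = (k + 2) * c.length := by ring
  have harith2 : c.length ≤ (k + 1) * c.length := by
    calc c.length = 1 * c.length := (one_mul _).symm
    _ ≤ (k + 1) * c.length := Nat.mul_le_mul_right _ (by omega)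
  -- embedded subword facts
  have e0a : IsEmbeddedSubword (g ^ (k + 2)) (u.length, B) := by
    refine ⟨hBne, ?_⟩
    rw [hr1, List.drop_left, List.take_left]
  have e0b : IsEmbeddedSubword (g ^ (k + 2)) (u.length + c.length, B) := by
    refine ⟨hBne, ?_⟩
    rw [hr2, show u.length + c.length = (u ++ c).length by simp,
      List.drop_left, List.take_left]
  have e1b : IsEmbeddedSubword (g ^ (k + 2)) (u.length + (k + 2) * c.length,
      FreeGroup.invRev u) ∨ u = [] := by
    rcases eq_or_ne u [] with hu | hu
    · exact Or.inr hu
    · refine Or.inl ⟨by simp [FreeGroup.invRev, hu], ?_⟩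
      rw [hr3, show u.length + (k + 2) * c.length = (u ++ NegAux.repw c (k + 2)).length by
        simp [NegAux.repw_length], List.drop_left, List.take_length]
  have hBlt : B.length < (g ^ (k + 2)).toWord.length := by
    rw [hlen, hBlen]; omega
  have hp0a : IsProperEmbeddedSubword (g ^ (k + 2)) (u.length, B) := ⟨e0a, hBlt⟩
  have hp0b : IsProperEmbeddedSubword (g ^ (k + 2)) (u.length + c.length, B) := ⟨e0b, hBlt⟩
  rcases eq_or_ne u [] with hu | hu
  · -- cyclically reduced case: two copies of B suffice
    refine ⟨fun _ => ((u.length, B), (u.length + c.length, B)), fun i => ⟨hp0a, hp0b⟩,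
      fun i => Or.inl rfl, fun i => ?_, ?_⟩
    · intro h
      have h' : u.length = u.length + c.length := congrArg Prod.fst h
      omega
    · have hempty : {j : ℕ | j < (g ^ (k + 2)).toWord.length ∧
          ∀ i : Fin 2, ¬CoversPos (u.length, B) j ∧ ¬CoversPos (u.length + c.length, B) j}
          = ∅ := by
        refine Set.eq_empty_iff_forall_notMem.2 fun j hj => ?_
        obtain ⟨hjl, hcov⟩ := hj
        obtain ⟨h1, h2⟩ := hcov 0
        simp only [CoversPos, not_and, not_lt] at h1 h2
        have hul : u.length = 0 := by rw [hu]; rfl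
        rw [hlen] at hjl
        rw [hBlen] at h1 h2
        rw [hul] at hjl h1 h2
        omega
      rw [hempty]
      simp only [Set.ncard_empty, Nat.cast_zero]
      positivity
  · -- general case: also cover the conjugating parts
    have hune : u.length ≠ 0 := by simpa using hu
    obtain e1b | hbad := e1b
    swap
    · exact absurd hbad hu
    have e1a : IsEmbeddedSubword (g ^ (k + 2)) (0, u) := by
      refine ⟨hu, ?_⟩
      rw [List.drop_zero, hr1, List.take_left]
    have hp1a : IsProperEmbeddedSubword (g ^ (k + 2)) (0, u) := by
      refine ⟨e1a, ?_⟩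
      show u.length < (g ^ (k + 2)).toWord.length
      rw [hlen]
      have : 1 ≤ (k + 2) * c.length := by
        calc 1 ≤ c.length := hlc
        _ = 1 * c.length := (one_mul _).symm
        _ ≤ (k + 2) * c.length := Nat.mul_le_mul_right _ (by omega)
      omega
    have hp1b : IsProperEmbeddedSubword (g ^ (k + 2))
        (u.length + (k + 2) * c.length, FreeGroup.invRev u) := by
      refine ⟨e1b, ?_⟩
      show (FreeGroup.invRev u).length < (g ^ (k + 2)).toWord.length
      rw [hlen, FreeGroup.invRev_length]
      have : 1 ≤ (k + 2) * c.length := by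
        calc 1 ≤ c.length := hlc
        _ = 1 * c.length := (one_mul _).symm
        _ ≤ (k + 2) * c.length := Nat.mul_le_mul_right _ (by omega)
      omega
    refine ⟨![((u.length, B), (u.length + c.length, B)),
        ((0, u), (u.length + (k + 2) * c.length, FreeGroup.invRev u))], ?_, ?_, ?_, ?_⟩
    · intro i
      fin_cases i
      · exact ⟨hp0a, hp0b⟩
      · exact ⟨hp1a, hp1b⟩
    · intro i
      fin_cases i
      · exact Or.inl rfl
      · exact Or.inr rfl
    · intro i
      fin_cases i
      · intro h
        have h' : u.length = u.length + c.length := congrArg Prod.fst h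
        omega
      · intro h
        have h' : (0 : ℕ) = u.length + (k + 2) * c.length := congrArg Prod.fst h
        omega
    · have hempty : {j : ℕ | j < (g ^ (k + 2)).toWord.length ∧
          ∀ i : Fin 2, ¬CoversPos ((![((u.length, B), (u.length + c.length, B)),
            ((0, u), (u.length + (k + 2) * c.length, FreeGroup.invRev u))] i).1) j ∧
            ¬CoversPos ((![((u.length, B), (u.length + c.length, B)),
            ((0, u), (u.length + (k + 2) * c.length, FreeGroup.invRev u))] i).2) j}
          = ∅ := by
        refine Set.eq_empty_iff_forall_notMem.2 fun j hj => ?_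
        obtain ⟨hjl, hcov⟩ := hj
        have h0 := hcov 0
        have h1 := hcov 1
        simp only [Matrix.cons_val_zero, Matrix.cons_val_one, Matrix.head_cons,
          CoversPos, not_and, not_lt] at h0 h1
        obtain ⟨h0a, h0b⟩ := h0
        obtain ⟨h1a, h1b⟩ := h1
        rw [hlen] at hjl
        rw [hBlen] at h0a h0b
        rw [FreeGroup.invRev_length] at h1b
        omega
      rw [hempty]
      simp only [Set.ncard_empty, Nat.cast_zero]
      positivity
end

section
/- Let F be the free group on free generators e_1, e_2, e_3, e_4, …, e_n with n ≥ 4, and fix a positive integer k. Then the set Y = { e_1^k · (e_4^{-1}·e_1^k) · (e_4^{-2}·e_1^k) ⋯ (e_4^{-(n-1)}·e_1^k) · e_4^{n(n-1)/2} : n = 1, 2, 3, … } is a non-negligible subset of F. -/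
open FirstOrder

namespace NonNegAux

open List

/-- start position of the `j`-th chunk -/
def cc (k : ℕ) : ℕ → ℕ
  | 0 => 0
  | j+1 => cc k j + j + k

lemma cc_succ (k j : ℕ) : cc k (j+1) = cc k j + j + k := rfl

lemma cc_mono (k : ℕ) : Monotone (cc k) := by
  apply monotone_nat_of_le_succ
  intro j; rw [cc_succ]; omega

lemma cc_sep (k : ℕ) {i j : ℕ} (h : i < j) : cc k i + i + k ≤ cc k j := by
  calc cc k i + i + k = cc k (i+1) := (cc_succ k i).symm
    _ ≤ cc k j := cc_mono k h

lemma ccj_mono (k : ℕ) {i j : ℕ} (h : i ≤ j) : cc k i + i ≤ cc k j + j := by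
  rcases Nat.eq_or_lt_of_le h with rfl | h
  · omega
  · have := cc_sep k h; omega

/-- is position `i` inside one of the `Bm` blocks -/
def inB (k n i : ℕ) : Prop := ∃ j, j < n ∧ cc k j ≤ i ∧ i < cc k j + j

lemma not_inB_block_end {k n j : ℕ} (hk : 0 < k) (hj : j ≤ n) : ¬ inB k n (cc k j + j) := by
  rintro ⟨j2, hj2, h1, h2⟩
  rcases le_or_gt j2 j with h | h
  · have := ccj_mono k h; omega
  · have := cc_sep k h; omega

lemma not_inB_block_pred {k n j : ℕ} (hk : 0 < k) (hj1 : 1 ≤ j) : ¬ inB k n (cc k j - 1) := by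
  rintro ⟨j2, hj2, h1, h2⟩
  have hcc : cc k (j-1) + (j-1) + k = cc k j := by
    have : j - 1 + 1 = j := by omega
    calc cc k (j-1) + (j-1) + k = cc k (j-1+1) := (cc_succ k (j-1)).symm
      _ = cc k j := by rw [this]
  rcases le_or_gt j2 (j-1) with h | h
  · have := ccj_mono k h; omega
  · have h' : j ≤ j2 := by omega
    have := cc_mono k h'; omega

lemma inB_unique {k n i j1 j2 : ℕ} (h1 : cc k j1 ≤ i) (h2 : i < cc k j1 + j1)
    (h3 : cc k j2 ≤ i) (h4 : i < cc k j2 + j2) : j1 = j2 := by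
  by_contra hne
  rcases Nat.lt_or_ge j1 j2 with h | h
  · have := cc_sep k h; omega
  · have hlt : j2 < j1 := by omega
    have := cc_sep k hlt; omega

lemma exists_block (k : ℕ) {p : ℕ} : ∀ (nn : ℕ), p < cc k nn →
    ∃ j, j < nn ∧ cc k j ≤ p ∧ p < cc k (j+1) := by
  intro nn
  induction nn with
  | zero => intro h; simp [cc] at h
  | succ s ih =>
    intro h
    rcases Nat.lt_or_ge p (cc k s) with h2 | h2
    · obtain ⟨j, hj⟩ := ih h2; exact ⟨j, by omega, hj.2⟩
    · exact ⟨s, by omega, h2, h⟩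

section Letters

variable {α : Type*} (a b : α) (k n : ℕ)

open Classical in
/-- the letter at position `i` of the word -/
noncomputable def ell (i : ℕ) : α × Bool :=
  if i < cc k n then (if inB k n i then (b, false) else (a, true)) else (b, true)

variable {a b k n}

lemma ell_of_inB {i : ℕ} (h : i < cc k n) (h2 : inB k n i) : ell a b k n i = (b, false) := by
  simp [ell, h, h2]

lemma ell_of_not_inB {i : ℕ} (h : i < cc k n) (h2 : ¬ inB k n i) : ell a b k n i = (a, true) := by
  simp [ell, h, h2]

lemma ell_of_ge {i : ℕ} (h : cc k n ≤ i) : ell a b k n i = (b, true) := by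
  simp [ell, Nat.not_lt.mpr h]

variable (hab : a ≠ b)
include hab

lemma eq_A_iff {i : ℕ} : ell a b k n i = (a, true) ↔ (i < cc k n ∧ ¬ inB k n i) := by
  constructor
  · intro h
    unfold ell at h
    split_ifs at h with h1 h2
    · exact absurd (congrArg Prod.fst h) hab.symm
    · exact ⟨h1, h2⟩
    · exact absurd (congrArg Prod.fst h) hab.symm
  · rintro ⟨h1, h2⟩; exact ell_of_not_inB h1 h2

lemma eq_Bm_iff {i : ℕ} : ell a b k n i = (b, false) ↔ (i < cc k n ∧ inB k n i) := by
  constructor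
  · intro h
    unfold ell at h
    split_ifs at h with h1 h2
    · exact ⟨h1, h2⟩
    · exact absurd (congrArg Prod.fst h) hab
    · exact absurd (congrArg Prod.snd h) (by simp)
  · rintro ⟨h1, h2⟩; exact ell_of_inB h1 h2

lemma ell_ne_aFalse {i : ℕ} : ell a b k n i ≠ (a, false) := by
  intro h
  unfold ell at h
  split_ifs at h with h1 h2
  · exact hab (congrArg Prod.fst h).symm
  · exact absurd (congrArg Prod.snd h) (by simp)
  · exact hab (congrArg Prod.fst h).symm

lemma eq_Bp_iff {i : ℕ} : ell a b k n i = (b, true) ↔ cc k n ≤ i := by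
  constructor
  · intro h
    unfold ell at h
    split_ifs at h with h1 h2
    · exact absurd (congrArg Prod.snd h) (by simp)
    · exact absurd (congrArg Prod.fst h) hab
    · omega
  · exact ell_of_ge

omit hab in
lemma ell_cases (i : ℕ) :
    ell a b k n i = (a, true) ∨ ell a b k n i = (b, false) ∨ ell a b k n i = (b, true) := by
  unfold ell; split_ifs <;> tauto

lemma run_in_block (hk : 0 < k) {x y j : ℕ} (hj : j < n) (hx2 : x < cc k j + j)
    (hrun : ∀ t, x ≤ t → t ≤ y → ell a b k n t = (b, false)) : y < cc k j + j := by
  by_contra hy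
  push_neg at hy
  have h1 : ell a b k n (cc k j + j) = (b, false) := hrun _ (by omega) (by omega)
  have h2 := (eq_Bm_iff hab).mp h1
  exact not_inB_block_end hk (le_of_lt hj) h2.2

lemma run_charact (hk : 0 < k) {x y : ℕ} (hxy : x ≤ y) (hx1 : 1 ≤ x)
    (hleft : ell a b k n (x-1) = (a, true))
    (hrun : ∀ t, x ≤ t → t ≤ y → ell a b k n t = (b, false))
    (hright : ell a b k n (y+1) = (a, true)) :
    ∃ j, j < n ∧ x = cc k j ∧ y + 1 = cc k j + j := by
  obtain ⟨hxP, j, hjn, hcx, hcx2⟩ := (eq_Bm_iff hab).mp (hrun x le_rfl hxy)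
  have hy2 : y < cc k j + j := run_in_block hab hk hjn hcx2 hrun
  have hleft' := ((eq_A_iff hab).mp hleft).2
  have hright' := ((eq_A_iff hab).mp hright).2
  rw [inB] at hleft' hright'
  push_neg at hleft' hright'
  have hl := hleft' j hjn
  have hr := hright' j hjn
  exact ⟨j, hjn, by omega, by omega⟩

end Letters

section Word

open FreeGroup

variable {α : Type*} [DecidableEq α] (a b : α) (k n : ℕ)

/-- the `j`-th chunk of the word -/
def chunk (j : ℕ) : List (α × Bool) := List.replicate j (b, false) ++ List.replicate k (a, true)

/-- length of the tail -/
def MM (n : ℕ) : ℕ := n * (n - 1) / 2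

/-- total length -/
def LL (k n : ℕ) : ℕ := cc k n + MM n

lemma two_MM (q : ℕ) : 2 * MM q = q * (q - 1) := by
  refine Nat.mul_div_cancel' ?_
  cases q with
  | zero => simp
  | succ s =>
    simp only [Nat.add_sub_cancel]
    rw [Nat.mul_comm]
    exact (Nat.even_mul_succ_self s).two_dvd

lemma MM_succ (q : ℕ) : MM (q + 1) = MM q + q := by
  have e1 := two_MM (q+1)
  have e2 := two_MM q
  have h1 : (q+1) * (q+1-1) = q * (q-1) + 2*q := by
    cases q with
    | zero => rfl
    | succ s => simp only [Nat.add_sub_cancel]; ring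
  omega

lemma cc_eq (k q : ℕ) : cc k q = q * k + MM q := by
  induction q with
  | zero => simp [cc, MM]
  | succ s ih =>
    have h1 : (s+1) * k = s * k + k := by ring
    rw [cc_succ, ih, MM_succ, h1]
    omega

lemma map_ell_const {β : Type*} {f : ℕ → β} {v : β} : ∀ (len s : ℕ),
    (∀ i, s ≤ i → i < s + len → f i = v) →
    (List.range' s len).map f = List.replicate len v := by
  intro len
  induction len with
  | zero => intro s _; simp
  | succ t ih =>
    intro s h
    rw [List.range'_succ, List.map_cons, List.replicate_succ, ih (s+1) (fun i h1 h2 => h i (by omega) (by omega)), h s le_rfl (by omega)]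

lemma LL_strictMono {k : ℕ} (hk : 0 < k) : StrictMono (LL k) := by
  apply strictMono_nat_of_lt_succ
  intro q
  have h1 := cc_succ k q
  have h2 := MM_succ q
  unfold LL
  omega

lemma big_n (N k n : ℕ) (hn : 8*N*k + 32*N + k + 5 ≤ n) :
    8*N*(k + 2*n + 2) + 1 ≤ n * (n - 1) := by
  obtain ⟨s, rfl⟩ : ∃ s, n = s + 1 := ⟨n - 1, by omega⟩
  simp only [Nat.add_sub_cancel]
  have h1 : (8*N*k + 32*N + k + 4) * s ≤ s * s :=
    Nat.mul_le_mul_right s (by omega)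
  have h2 : (8*N*k + 32*N + k + 4) * s = (8*N*k)*s + ((16*N)*s + (16*N)*s) + k*s + 4*s := by
    ring
  have h3 : (8*N*k)*1 ≤ (8*N*k)*s := Nat.mul_le_mul_left (8*N*k) (by omega)
  have h3' : (8*N*k)*1 = 8*N*k := by ring
  have h4 : (16*N)*2 ≤ (16*N)*s := Nat.mul_le_mul_left (16*N) (by omega)
  have h5 : 8*N*(k + 2*(s+1) + 2) + 1 = 8*N*k + (16*N)*s + 32*N + 1 := by ring
  have h6 : (s+1)*s = s*s + s := by ring
  have h7 : (16*N)*2 = 32*N := by ring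
  omega

/-- the full word -/
def Wd : List (α × Bool) :=
  (List.range n).flatMap (chunk a b k) ++ List.replicate (MM n) (b, true)

lemma flatMap_chunk_eq : ∀ nn, nn ≤ n →
    (List.range nn).flatMap (chunk a b k) = (List.range' 0 (cc k nn)).map (ell a b k n) := by
  intro nn
  induction nn with
  | zero => simp [cc]
  | succ s ih =>
    intro h
    rw [List.range_succ, List.flatMap_append, ih (by omega), List.flatMap_singleton]
    have hsplit : cc k (s+1) = cc k s + (s + k) := by rw [cc_succ]; ring
    rw [hsplit, ← List.range'_append (s := 0) (m := cc k s) (n := s+k) (step := 1), List.map_append]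
    congr 1
    have hsplit2 : 0 + 1 * cc k s = cc k s := by ring
    rw [hsplit2]
    have hsep : cc k s + s + k ≤ cc k n := cc_sep k (by omega)
    have h2 : (k + s) = k + s := rfl
    rw [← List.range'_append (s := cc k s) (m := s) (n := k) (step := 1), List.map_append]
    unfold chunk
    congr 1
    · refine (map_ell_const _ _ ?_).symm
      intro i h1 h2
      exact ell_of_inB (by omega) ⟨s, by omega, by omega, by omega⟩
    · rw [show cc k s + 1 * s = cc k s + s from by ring]
      refine (map_ell_const _ _ ?_).symm
      intro i h1 h2
      refine ell_of_not_inB (by omega) ?_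
      rintro ⟨j2, hj2, hc1, hc2⟩
      rcases le_or_gt j2 s with hle | hlt
      · have := ccj_mono k hle; omega
      · have := cc_sep k hlt; omega

lemma Wd_eq : Wd a b k n = (List.range' 0 (LL k n)).map (ell a b k n) := by
  unfold Wd LL
  rw [flatMap_chunk_eq a b k n n le_rfl]
  rw [← List.range'_append (s := 0) (m := cc k n) (n := MM n) (step := 1), List.map_append]
  congr 1
  rw [show 0 + 1 * cc k n = cc k n from by ring]
  exact (map_ell_const _ _ (fun i h1 _ => ell_of_ge h1)).symm

lemma Wd_length : (Wd a b k n).length = LL k n := by rw [Wd_eq]; simp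

lemma Wd_get (i : ℕ) (h : i < (Wd a b k n).length) :
    (Wd a b k n)[i] = ell a b k n i := by
  have h' : i < LL k n := by rwa [Wd_length] at h
  simp only [Wd_eq]
  rw [List.getElem_map, List.getElem_range']
  simp

lemma reduce_eq_self {L : List (α × Bool)}
    (h : List.Chain' (fun x y => ¬(x.1 = y.1 ∧ x.2 = !y.2)) L) : FreeGroup.reduce L = L := by
  induction L with
  | nil => rfl
  | cons x L ih =>
    rw [FreeGroup.reduce.cons, ih h.tail]
    cases L with
    | nil => rfl
    | cons y t =>
      have hxy := (List.isChain_cons_cons.mp h).1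
      show (if x.1 = y.1 ∧ x.2 = !y.2 then t else x :: y :: t) = x :: y :: t
      rw [if_neg hxy]

variable {a b k n}

lemma Wd_chain (hab : a ≠ b) (hk : 0 < k) :
    List.Chain' (fun x y => ¬(x.1 = y.1 ∧ x.2 = !y.2)) (Wd a b k n) := by
  apply List.isChain_iff_getElem.mpr
  intro i hi
  have hlen : (Wd a b k n).length = LL k n := Wd_length a b k n
  rw [Wd_get a b k n i (by omega), Wd_get a b k n (i+1) (by omega)]
  rintro ⟨h1, h2⟩
  rcases ell_cases (a := a) (b := b) (k := k) (n := n) i with hA | hB | hC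
  · rcases ell_cases (a := a) (b := b) (k := k) (n := n) (i+1) with h2' | h2' | h2' <;> simp_all
  · rcases ell_cases (a := a) (b := b) (k := k) (n := n) (i+1) with h2' | h2' | h2'
    · simp_all
    · simp_all
    · obtain ⟨hiP, hinB⟩ := (eq_Bm_iff hab).mp hB
      have hge := (eq_Bp_iff hab).mp h2'
      have hn1 : 1 ≤ n := by
        by_contra hn
        push_neg at hn
        have hn0 : n = 0 := by omega
        subst hn0
        simp [cc] at hiP
      have hieq : i = cc k n - 1 := by omega
      exact not_inB_block_pred hk hn1 (hieq ▸ hinB)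
  · rcases ell_cases (a := a) (b := b) (k := k) (n := n) (i+1) with h2' | h2' | h2'
    · simp_all
    · have hge := (eq_Bp_iff hab).mp hC
      have hlt := ((eq_Bm_iff hab).mp h2').1
      omega
    · simp_all

lemma of_pow (x : α) (q : ℕ) :
    FreeGroup.of x ^ q = FreeGroup.mk (List.replicate q (x, true)) := by
  show FreeGroup.mk [(x, true)] ^ q = _
  rw [FreeGroup.pow_mk, List.flatten_replicate_singleton]

lemma of_zpow_neg (x : α) (q : ℕ) :
    FreeGroup.of x ^ (-(q : ℤ)) = FreeGroup.mk (List.replicate q (x, false)) := by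
  rw [zpow_neg, zpow_natCast, of_pow, FreeGroup.inv_mk]
  congr 1
  simp [FreeGroup.invRev]

lemma flatMap_cast (l : List ℕ) :
    (l.flatMap fun a => [((a : ℕ) : ℤ)]) = l.map (fun a => ((a : ℕ) : ℤ)) := by
  induction l with
  | nil => rfl
  | cons x t ih => simp [ih]

lemma prod_chunks (a b : α) (k : ℕ) : ∀ q : ℕ,
    FreeGroup.of a ^ k *
      ((List.range q).map (fun j : ℕ =>
        FreeGroup.of b ^ (-((j : ℤ) + 1)) * FreeGroup.of a ^ k)).prod
      = FreeGroup.mk ((List.range (q+1)).flatMap (chunk a b k)) := by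
  intro q
  induction q with
  | zero =>
    simp only [List.range_zero, List.map_nil, List.prod_nil, mul_one]
    rw [of_pow]
    congr 1
    rw [show (0+1) = 1 from rfl, List.range_succ, List.range_zero, List.nil_append, List.flatMap_singleton]
    simp [chunk]
  | succ s ih =>
    rw [List.range_succ, List.map_append, List.prod_append, ← mul_assoc, ih]
    simp only [List.map_cons, List.map_nil, List.prod_cons, List.prod_nil, mul_one]
    have he : (-((s : ℤ) + 1)) = -(((s+1 : ℕ) : ℤ)) := by push_cast; ring
    rw [he, of_zpow_neg, of_pow, FreeGroup.mul_mk, FreeGroup.mul_mk,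
      List.range_succ (n := s+1), List.flatMap_append, List.flatMap_singleton]
    rfl

lemma y_eq_mk (a b : α) {k n : ℕ} (hn : 1 ≤ n) :
    FreeGroup.of a ^ k *
      ((List.range (n-1)).map (fun j =>
        FreeGroup.of b ^ (-((j : ℤ) + 1)) * FreeGroup.of a ^ k)).prod *
      FreeGroup.of b ^ (n * (n-1) / 2)
      = FreeGroup.mk (Wd a b k n) := by
  have hmaps : ((List.range (n-1)).map (fun j =>
        FreeGroup.of b ^ (-((j : ℤ) + 1)) * FreeGroup.of a ^ k))
      = ((List.range (n-1)).map (fun j : ℕ =>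
        FreeGroup.of b ^ (-((j : ℤ) + 1)) * FreeGroup.of a ^ k)) := by
    show List.map _ ((List.range (n-1)).flatMap fun a => [((a : ℕ) : ℤ)]) = _
    rw [flatMap_cast, List.map_map]
    rfl
  rw [hmaps]
  have h := prod_chunks a b k (n-1)
  rw [show n - 1 + 1 = n from by omega] at h
  rw [h, of_pow, FreeGroup.mul_mk]
  rfl

lemma toWord_y (a b : α) {k n : ℕ} (hab : a ≠ b) (hk : 0 < k) (hn : 1 ≤ n) :
    (FreeGroup.of a ^ k *
      ((List.range (n-1)).map (fun j =>
        FreeGroup.of b ^ (-((j : ℤ) + 1)) * FreeGroup.of a ^ k)).prod *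
      FreeGroup.of b ^ (n * (n-1) / 2)).toWord = Wd a b k n := by
  rw [y_eq_mk a b hn, FreeGroup.toWord_mk, reduce_eq_self (Wd_chain hab hk)]

end Word

section Occ

variable {α : Type*} [DecidableEq α] (a b : α) (k n : ℕ)

/-- `u` occurs at position `p` (pointwise form) -/
def Occ (p : ℕ) (u : List (α × Bool)) : Prop :=
  p + u.length ≤ LL k n ∧ ∀ t (ht : t < u.length), ell a b k n (p + t) = u[t]

variable {a b k n}

lemma occ_of_take {p : ℕ} {u : List (α × Bool)} (hu : u ≠ [])
    (h : ((Wd a b k n).drop p).take u.length = u) : Occ a b k n p u := by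
  have hWlen : (Wd a b k n).length = LL k n := Wd_length a b k n
  have hlen := congrArg List.length h
  rw [List.length_take, List.length_drop] at hlen
  have hupos : 0 < u.length := List.length_pos_iff.mpr hu
  have hple : p + u.length ≤ LL k n := by omega
  refine ⟨hple, ?_⟩
  intro t ht
  have ht2 : t < ((Wd a b k n).drop p).length := by
    rw [List.length_drop]; omega
  have e1 : (((Wd a b k n).drop p).take u.length)[t]'(by rw [h]; exact ht) = u[t] :=
    getElem_congr_coll h
  have e2 : (((Wd a b k n).drop p).take u.length)[t]'(by rw [h]; exact ht)
      = ((Wd a b k n).drop p)[t]'ht2 := List.getElem_take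
  have e3 : ((Wd a b k n).drop p)[t]'ht2 = (Wd a b k n)[p+t]'(by rw [Wd_length]; omega) :=
    List.getElem_drop
  rw [← e1, e2, e3]
  exact (Wd_get a b k n (p+t) (by rw [Wd_length]; omega)).symm

lemma invWord_length (u : List (α × Bool)) : (invWord u).length = u.length := by
  simp [invWord]

lemma invWord_invWord (u : List (α × Bool)) : invWord (invWord u) = u := by
  simp [invWord, List.map_reverse, Function.comp_def]

lemma invWord_getElem (u : List (α × Bool)) {s : ℕ} (hs : s < u.length) :
    (invWord u)[u.length - 1 - s]'(by rw [invWord_length]; omega)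
      = ((u[s]).1, !(u[s]).2) := by
  unfold invWord
  rw [List.getElem_reverse, List.getElem_map]
  have hidx : (u.map fun x => (x.1, !x.2)).length - 1 - (u.length - 1 - s) = s := by
    simp only [List.length_map]
    omega
  simp only [hidx]

/-- the main covering bound for a valid pair of embedded subwords -/
lemma cover_bound (hab : a ≠ b) (hk : 0 < k) {p : ℕ} {u : List (α × Bool)}
    {p' : ℕ} {u' : List (α × Bool)} (hu : u ≠ [])
    (h1 : Occ a b k n p u) (h2 : Occ a b k n p' u')
    (hw : u' = u ∨ u' = invWord u) (hne : (p, u) ≠ (p', u')) :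
    min (p + u.length) (cc k n) ≤ p + (k + 2*n + 2) := by
  set B := k + 2*n + 2 with hB
  by_contra hcon
  push_neg at hcon
  rw [lt_min_iff] at hcon
  obtain ⟨hcon1, hcon2⟩ := hcon
  have hBu : B < u.length := by omega
  rcases hw with hw' | hw'
  · -- same word
    have h2' : Occ a b k n p' u := by rw [hw'] at h2; exact h2
    have hne' : p ≠ p' := fun hpp => hne (by rw [hpp, hw'])
    have heq : ∀ t, t < u.length → ell a b k n (p+t) = ell a b k n (p'+t) := by
      intro t ht
      rw [h1.2 t ht, h2'.2 t ht]
    obtain ⟨j1, hj1n, hj1a, hj1b⟩ := exists_block k n (by omega : p < cc k n)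
    obtain ⟨j, hj⟩ : ∃ j, j = j1 + 1 := ⟨_, rfl⟩
    obtain ⟨x, hx⟩ : ∃ x, x = cc k j := ⟨_, rfl⟩
    have hccs : cc k j = cc k j1 + j1 + k := by rw [hj]; exact cc_succ k j1
    have hxp : p < x := by rw [hx, hj]; exact hj1b
    have hxj : x + j ≤ p + B := by omega
    have hxltP : x + j < cc k n := by omega
    have hjn : j < n := by
      by_contra hc
      push_neg at hc
      have h2 := cc_mono k hc
      rw [← hx] at h2
      omega
    have hx1 : 1 ≤ x := by omega
    have hL : ell a b k n (x-1) = (a, true) := by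
      rw [hx]
      refine ell_of_not_inB (by omega) (not_inB_block_pred hk (by omega))
    have hR : ell a b k n (x+j) = (a, true) := by
      rw [hx]
      refine ell_of_not_inB (by omega) (not_inB_block_end hk (le_of_lt hjn))
    have hM : ∀ t, t < j → ell a b k n (x + t) = (b, false) := by
      intro t ht
      exact ell_of_inB (by omega) ⟨j, hjn, by omega, by omega⟩
    have htr : ∀ z, p ≤ z → z ≤ p + B → ell a b k n z = ell a b k n (p' + (z - p)) := by
      intro z hz1 hz2
      have := heq (z - p) (by omega)
      rwa [show p + (z - p) = z from by omega] at this
    obtain ⟨q, hq⟩ : ∃ q, q = p' + (x - p) := ⟨_, rfl⟩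
    have hq1 : ell a b k n (q - 1) = (a, true) := by
      have h := htr (x-1) (by omega) (by omega)
      rw [hL] at h
      rw [show p' + (x - 1 - p) = q - 1 from by omega] at h
      exact h.symm
    have hqM : ∀ t, q ≤ t → t ≤ q + j - 1 → ell a b k n t = (b, false) := by
      intro t ht1 ht2
      have h := htr (x + (t - q)) (by omega) (by omega)
      rw [hM (t - q) (by omega)] at h
      rw [show p' + (x + (t - q) - p) = t from by omega] at h
      exact h.symm
    have hqR : ell a b k n (q + j - 1 + 1) = (a, true) := by
      have h := htr (x + j) (by omega) (by omega)
      rw [hR] at h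
      rw [show p' + (x + j - p) = q + j - 1 + 1 from by omega] at h
      exact h.symm
    obtain ⟨j2, hj2n, hj2x, hj2y⟩ :=
      run_charact hab hk (x := q) (y := q + j - 1) (by omega) (by omega) hq1 hqM hqR
    have hj2j : j2 = j := by omega
    subst hj2j
    have : q = x := by omega
    exact hne' (by omega)
  · -- inverse word
    have h2' : Occ a b k n p' (invWord u) := by rw [hw'] at h2; exact h2
    have hlen' : (invWord u).length = u.length := invWord_length u
    have hclaim : ∀ s, s ≤ B → ell a b k n (p + s) = (b, false) := by
      intro s hs
      have hs' : s < u.length := by omega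
      rcases ell_cases (a := a) (b := b) (k := k) (n := n) (p + s) with hA | hBm | hBp
      · exfalso
        have h3 := h2'.2 (u.length - 1 - s) (by rw [hlen']; omega)
        rw [invWord_getElem u hs'] at h3
        rw [← h1.2 s hs', hA] at h3
        exact ell_ne_aFalse hab h3
      · exact hBm
      · exfalso
        have := (eq_Bp_iff hab).mp hBp
        omega
    have hBm0 := (eq_Bm_iff hab).mp (by simpa using hclaim 0 (by omega))
    obtain ⟨hpP, j, hjn, hc1, hc2⟩ := hBm0
    have hrun : ∀ t, p ≤ t → t ≤ p + B → ell a b k n t = (b, false) := by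
      intro t ht1 ht2
      have := hclaim (t - p) (by omega)
      rwa [show p + (t - p) = t from by omega] at this
    have := run_in_block hab hk hjn hc2 hrun
    omega

end Occ

end NonNegAux

/-- In the free group on `m ≥ 4` generators `e₁, e₂, e₃, e₄, …`, and for a fixed
positive integer `k`, the set of the words
`e₁ᵏ (e₄⁻¹ e₁ᵏ)(e₄⁻² e₁ᵏ) ⋯ (e₄^{-(n-1)} e₁ᵏ) e₄^{n(n-1)/2}` (for `n = 1, 2, 3, …`)
is non-negligible. -/



theorem nonnegligible_words (m : ℕ) (hm : 4 ≤ m) (k : ℕ) (hk : 0 < k) :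
    ¬ Negligible {y : FreeGroup (Fin m) | ∃ n : ℕ, 1 ≤ n ∧
      y = (FreeGroup.of (⟨0, by omega⟩ : Fin m)) ^ k *
          ((List.range (n - 1)).map (fun j =>
            (FreeGroup.of (⟨3, by omega⟩ : Fin m)) ^ (-((j : ℤ) + 1)) *
            (FreeGroup.of (⟨0, by omega⟩ : Fin m)) ^ k)).prod *
          (FreeGroup.of (⟨3, by omega⟩ : Fin m)) ^ (n * (n - 1) / 2)} := by
    classical
  open NonNegAux in
  rintro ⟨N, hN⟩
  obtain ⟨S, hS⟩ := hN (1/4 : ℝ) (by norm_num)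
  set a : Fin m := ⟨0, by omega⟩ with ha
  set b : Fin m := ⟨3, by omega⟩ with hb
  have hab : a ≠ b := by
    intro h
    rw [ha, hb, Fin.mk.injEq] at h
    omega
  set F : ℕ → FreeGroup (Fin m) := fun q =>
    FreeGroup.of a ^ k *
      ((List.range (q - 1)).map (fun j =>
        FreeGroup.of b ^ (-((j : ℤ) + 1)) * FreeGroup.of a ^ k)).prod *
      FreeGroup.of b ^ (q * (q - 1) / 2) with hF
  have hyW : ∀ q, 1 ≤ q → (F q).toWord = Wd a b k q := by
    intro q hq
    exact toWord_y a b hab hk hq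
  have hyWlen : ∀ q, 1 ≤ q → (F q).toWord.length = LL k q := by
    intro q hq
    rw [hyW q hq, Wd_length]
  -- choose a large n avoiding S
  obtain ⟨n, hn0, hnS⟩ : ∃ n, 8*N*k + 32*N + k + 5 ≤ n ∧ F n ∉ S := by
    by_contra hc
    push_neg at hc
    have hinj : Set.InjOn F (Set.Ici (8*N*k + 32*N + k + 5)) := by
      intro n1 h1 n2 h2 he
      have e1 := congrArg List.length (congrArg FreeGroup.toWord he)
      simp only [Set.mem_Ici] at h1 h2
      rw [hyWlen n1 (by omega), hyWlen n2 (by omega)] at e1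
      exact (LL_strictMono hk).injective e1
    have himg : (F '' Set.Ici (8*N*k + 32*N + k + 5)) ⊆ ↑S := by
      rintro _ ⟨q, hq, rfl⟩
      exact hc q hq
    exact (Set.Ici_infinite _).image hinj (S.finite_toSet.subset himg)
  have hn1 : 1 ≤ n := by omega
  have hmem : F n ∈ {y : FreeGroup (Fin m) | ∃ q : ℕ, 1 ≤ q ∧
      y = (FreeGroup.of (⟨0, by omega⟩ : Fin m)) ^ k *
          ((List.range (q - 1)).map (fun j =>
            (FreeGroup.of (⟨3, by omega⟩ : Fin m)) ^ (-((j : ℤ) + 1)) *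
            (FreeGroup.of (⟨0, by omega⟩ : Fin m)) ^ k)).prod *
          (FreeGroup.of (⟨3, by omega⟩ : Fin m)) ^ (q * (q - 1) / 2)} := ⟨n, hn1, rfl⟩
  obtain ⟨sub, hprop, hword, hdist, hcount⟩ := hS (F n) hmem hnS
  -- occurrences
  have hocc1 : ∀ i, Occ a b k n (sub i).1.1 (sub i).1.2 := by
    intro i
    refine occ_of_take ((hprop i).1.1).1 ?_
    rw [← hyW n hn1]
    exact ((hprop i).1.1).2
  have hocc2 : ∀ i, Occ a b k n (sub i).2.1 (sub i).2.2 := by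
    intro i
    refine occ_of_take ((hprop i).2.1).1 ?_
    rw [← hyW n hn1]
    exact ((hprop i).2.1).2
  have hbound1 : ∀ i, min ((sub i).1.1 + (sub i).1.2.length) (cc k n)
      ≤ (sub i).1.1 + (k + 2*n + 2) := by
    intro i
    exact cover_bound hab hk ((hprop i).1.1).1 (hocc1 i) (hocc2 i) (hword i) (hdist i)
  have hbound2 : ∀ i, min ((sub i).2.1 + (sub i).2.2.length) (cc k n)
      ≤ (sub i).2.1 + (k + 2*n + 2) := by
    intro i
    refine cover_bound hab hk ((hprop i).2.1).1 (hocc2 i) (hocc1 i) ?_ ?_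
    · rcases hword i with h | h
      · exact Or.inl h.symm
      · exact Or.inr (by rw [h, invWord_invWord])
    · exact (hdist i).symm
  -- counting
  set B : ℕ := k + 2*n + 2 with hBdef
  set Unc : Finset ℕ := (Finset.range (LL k n)).filter
    (fun j => ∀ i, ¬ CoversPos ((sub i).1) j ∧ ¬ CoversPos ((sub i).2) j) with hUnc
  have hseteq : {j : ℕ | j < (F n).toWord.length ∧
      ∀ i, ¬ CoversPos ((sub i).1) j ∧ ¬ CoversPos ((sub i).2) j} = ↑Unc := by
    ext j
    simp only [hUnc, Finset.coe_filter, Set.mem_setOf_eq, Finset.mem_range, hyWlen n hn1]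
  rw [hseteq, Set.ncard_coe_finset, hyWlen n hn1] at hcount
  have h4U : 4 * Unc.card ≤ LL k n := by
    have h := hcount
    have h2 : (4 * Unc.card : ℝ) ≤ (LL k n : ℝ) := by
      push_cast at h ⊢
      linarith
    exact_mod_cast h2
  -- covered sets
  set C1 : Fin N → Finset ℕ := fun i =>
    (Finset.range (cc k n)).filter (fun j => CoversPos (sub i).1 j) with hC1
  set C2 : Fin N → Finset ℕ := fun i =>
    (Finset.range (cc k n)).filter (fun j => CoversPos (sub i).2 j) with hC2
  have hC1card : ∀ i, (C1 i).card ≤ B := by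
    intro i
    calc (C1 i).card ≤ (Finset.Ico (sub i).1.1 ((sub i).1.1 + B)).card := by
          apply Finset.card_le_card
          intro j hj
          simp only [hC1, Finset.mem_filter, Finset.mem_range] at hj
          obtain ⟨hjr, hcov1, hcov2⟩ := hj
          have := hbound1 i
          rw [Finset.mem_Ico]
          constructor
          · exact hcov1
          · have : j < min ((sub i).1.1 + (sub i).1.2.length) (cc k n) := by
              rw [lt_min_iff]; exact ⟨hcov2, hjr⟩
            omega
      _ = (sub i).1.1 + B - (sub i).1.1 := Nat.card_Ico _ _
      _ ≤ B := by omega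
  have hC2card : ∀ i, (C2 i).card ≤ B := by
    intro i
    calc (C2 i).card ≤ (Finset.Ico (sub i).2.1 ((sub i).2.1 + B)).card := by
          apply Finset.card_le_card
          intro j hj
          simp only [hC2, Finset.mem_filter, Finset.mem_range] at hj
          obtain ⟨hjr, hcov1, hcov2⟩ := hj
          have := hbound2 i
          rw [Finset.mem_Ico]
          constructor
          · exact hcov1
          · have : j < min ((sub i).2.1 + (sub i).2.2.length) (cc k n) := by
              rw [lt_min_iff]; exact ⟨hcov2, hjr⟩
            omega
      _ = (sub i).2.1 + B - (sub i).2.1 := Nat.card_Ico _ _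
      _ ≤ B := by omega
  have hcover : Finset.range (cc k n) ⊆
      Unc ∪ Finset.univ.biUnion (fun i : Fin N => C1 i ∪ C2 i) := by
    intro j hj
    rw [Finset.mem_range] at hj
    rw [Finset.mem_union]
    by_cases hc : ∀ i, ¬ CoversPos ((sub i).1) j ∧ ¬ CoversPos ((sub i).2) j
    · left
      rw [hUnc, Finset.mem_filter, Finset.mem_range]
      have : cc k n ≤ LL k n := by unfold LL; omega
      exact ⟨by omega, hc⟩
    · right
      push_neg at hc
      obtain ⟨i, hi⟩ := hc
      rw [Finset.mem_biUnion]
      refine ⟨i, Finset.mem_univ i, ?_⟩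
      rw [Finset.mem_union]
      by_cases hcase : CoversPos ((sub i).1) j
      · left; rw [hC1, Finset.mem_filter, Finset.mem_range]; exact ⟨hj, hcase⟩
      · right; rw [hC2, Finset.mem_filter, Finset.mem_range]
        exact ⟨hj, hi hcase⟩
  have hPle : cc k n ≤ Unc.card + N * (2*B) := by
    calc cc k n = (Finset.range (cc k n)).card := (Finset.card_range _).symm
      _ ≤ (Unc ∪ Finset.univ.biUnion (fun i : Fin N => C1 i ∪ C2 i)).card :=
          Finset.card_le_card hcover
      _ ≤ Unc.card + (Finset.univ.biUnion (fun i : Fin N => C1 i ∪ C2 i)).card :=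
          Finset.card_union_le _ _
      _ ≤ Unc.card + ∑ i : Fin N, (C1 i ∪ C2 i).card :=
          Nat.add_le_add_left (Finset.card_biUnion_le) _
      _ ≤ Unc.card + ∑ _i : Fin N, 2*B := by
          refine Nat.add_le_add_left (Finset.sum_le_sum fun i _ => ?_) _
          calc (C1 i ∪ C2 i).card ≤ (C1 i).card + (C2 i).card := Finset.card_union_le _ _
            _ ≤ 2*B := by have := hC1card i; have := hC2card i; omega
      _ = Unc.card + N * (2*B) := by
          rw [Finset.sum_const, Finset.card_univ, Fintype.card_fin, smul_eq_mul]
  -- final arithmetic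
  have hbig : 8*N*(k + 2*n + 2) + 1 ≤ n * (n - 1) := big_n N k n hn0
  have htwo : 2 * MM n = n * (n - 1) := two_MM n
  have hcceq : cc k n = n * k + MM n := cc_eq k n
  have hLL : LL k n = cc k n + MM n := rfl
  have hT : 4 * (N * (2*B)) = 8*N*(k + 2*n + 2) := by rw [hBdef]; ring
  omega
end
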